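/- arXiv:1907.07479 — 7 statements merged into one kernel-verified Lean document; each statement's English description precedes it below -/
import Mathlib

section
/- Let d ≥ 2 be an integer and b ≥ (d+1)/(d−1) a real number. Then the set {λ ∈ S¹ : there exists n ≥ 1 with f_λ^n(1) = −1} is dense in the unit circle S¹. (Equivalently, the zero parameters on the unit circle of the anti-ferromagnetic Ising partition function of rooted Cayley trees of down-degree d are dense in S¹.) -/
open Complex

/-- The Ising recursion map `f_λ(z) = λ·((z+b)/(bz+1))^d`. -/
noncomputable def fIsing (d : ℕ) (b : ℝ) (lam z : ℂ) : ℂ :=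
  lam * ((z + (b : ℂ)) / ((b : ℂ) * z + 1)) ^ d

namespace IsingAux

open Real

/-! ### The angle lift machinery -/

noncomputable def tau (b α : ℝ) : ℝ := Real.arctan (Real.sin α / (b + Real.cos α))

noncomputable def gg (d : ℕ) (b α : ℝ) : ℝ := d * (2 * tau b α - α)

noncomputable def AA (d : ℕ) (b : ℝ) : ℕ → ℝ → ℝ
  | 0, _ => 0
  | n+1, θ => θ + gg d b (AA d b n θ)

lemma p_pos {b : ℝ} (hb : 1 < b) (α : ℝ) : 0 < b + Real.cos α := by
  nlinarith [Real.neg_one_le_cos α]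

lemma hE (x y : ℝ) :
    Complex.exp (x*I) * Complex.exp (y*I) = Complex.exp ((↑(x+y))*I) := by
  rw [← Complex.exp_add]; push_cast; ring_nf

noncomputable def rr (b α : ℝ) : ℝ :=
  (b + Real.cos α) * Real.sqrt (1 + (Real.sin α / (b + Real.cos α))^2)

lemma rr_pos {b : ℝ} (hb : 1 < b) (α : ℝ) : 0 < rr b α := by
  have hp := p_pos hb α
  have : 0 < Real.sqrt (1 + (Real.sin α / (b + Real.cos α))^2) :=
    Real.sqrt_pos.mpr (by positivity)
  exact mul_pos hp this

lemma polar {b : ℝ} (hb : 1 < b) (α : ℝ) :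
    (b : ℂ) + Complex.exp (α * I) = ((rr b α : ℝ) : ℂ) * Complex.exp ((tau b α : ℝ) * I) := by
  have hp : 0 < b + Real.cos α := p_pos hb α
  set p := b + Real.cos α with hpdef
  set t := Real.sin α / p with htdef
  have hu2 : Real.sqrt (1 + t^2) ^ 2 = 1 + t^2 := Real.sq_sqrt (by positivity)
  have hu : 0 < Real.sqrt (1 + t^2) := Real.sqrt_pos.mpr (by positivity)
  have h1 : rr b α * Real.cos (tau b α) = p := by
    rw [rr, tau, Real.cos_arctan]
    rw [← htdef, ← hpdef]
    field_simp
  have h2 : rr b α * Real.sin (tau b α) = Real.sin α := by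
    rw [rr, tau, Real.sin_arctan]
    rw [← htdef, ← hpdef]
    have : t * p = Real.sin α := by rw [htdef, div_mul_cancel₀ _ hp.ne']
    field_simp
    nlinarith [this]
  symm
  calc ((rr b α : ℝ) : ℂ) * Complex.exp ((tau b α : ℝ) * I)
      = ((rr b α * Real.cos (tau b α) : ℝ) : ℂ)
        + ((rr b α * Real.sin (tau b α) : ℝ) : ℂ) * I := by
        rw [Complex.exp_mul_I]
        push_cast
        ring
    _ = (b : ℂ) + Complex.exp (α * I) := by
        rw [h1, h2, Complex.exp_mul_I, hpdef]
        push_cast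
        ring

lemma tau_neg (b α : ℝ) : tau b (-α) = - tau b α := by
  rw [tau, tau, Real.sin_neg, Real.cos_neg, neg_div, Real.arctan_neg]

lemma rr_neg (b α : ℝ) : rr b (-α) = rr b α := by
  rw [rr, rr, Real.sin_neg, Real.cos_neg, neg_div, neg_sq]

lemma ratio {b : ℝ} (hb : 1 < b) (α : ℝ) :
    (Complex.exp ((α:ℝ) * I) + b) / (b * Complex.exp ((α:ℝ) * I) + 1)
      = Complex.exp (((2 * tau b α - α : ℝ)) * I) := by
  have hnum : Complex.exp ((α:ℝ) * I) + b = ((rr b α : ℝ):ℂ) * Complex.exp ((tau b α : ℝ) * I) := by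
    rw [← polar hb α]; ring
  have hden : b * Complex.exp ((α:ℝ) * I) + 1
      = Complex.exp ((α:ℝ) * I) * (((rr b α : ℝ):ℂ) * Complex.exp ((-tau b α : ℝ) * I)) := by
    have := polar hb (-α)
    rw [tau_neg, rr_neg] at this
    have hexp : Complex.exp ((-α:ℝ) * I) = Complex.exp (-((α:ℝ) * I)) := by push_cast; ring_nf
    rw [hexp, Complex.exp_neg] at this
    have hne : Complex.exp ((α:ℝ) * I) ≠ 0 := Complex.exp_ne_zero _
    calc b * Complex.exp ((α:ℝ) * I) + 1
        = Complex.exp ((α:ℝ) * I) * ((b:ℂ) + (Complex.exp ((α:ℝ) * I))⁻¹) := by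
          rw [mul_add, mul_inv_cancel₀ hne]
          ring
      _ = Complex.exp ((α:ℝ) * I) * (((rr b α : ℝ):ℂ) * Complex.exp ((-tau b α : ℝ) * I)) := by
          rw [this]
  rw [hnum, hden]
  have h1 : Complex.exp ((α:ℝ) * I) ≠ 0 := Complex.exp_ne_zero _
  have h2 : Complex.exp ((-tau b α : ℝ) * I) ≠ 0 := Complex.exp_ne_zero _
  have h3 : ((rr b α : ℝ):ℂ) ≠ 0 := by
    exact_mod_cast ne_of_gt (rr_pos hb α)
  rw [div_eq_iff (by simp [h1, h2, h3])]
  have key : Complex.exp (((2 * tau b α - α : ℝ)) * I)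
      * (Complex.exp ((-tau b α : ℝ) * I) * Complex.exp ((α:ℝ) * I))
      = Complex.exp ((tau b α : ℝ) * I) := by
    rw [hE, hE]
    congr 1
    push_cast
    ring
  linear_combination -((rr b α : ℝ):ℂ) * key

lemma iter {b : ℝ} (hb : 1 < b) (d : ℕ) (θ : ℝ) (n : ℕ) :
    (fIsing d b (Complex.exp ((θ:ℝ) * I)))^[n] 1 = Complex.exp ((AA d b n θ : ℝ) * I) := by
  induction n with
  | zero => simp [AA]
  | succ n ih =>
      rw [Function.iterate_succ_apply', ih, fIsing, ratio hb]
      rw [← Complex.exp_nat_mul, ← Complex.exp_add]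
      rw [show AA d b (n+1) θ = θ + gg d b (AA d b n θ) from rfl, gg]
      push_cast
      ring_nf

/-! ### Derivatives -/

noncomputable def GG (d : ℕ) (b α : ℝ) : ℝ := -(d * (b^2 - 1) / (b^2 + 2*b*Real.cos α + 1))

noncomputable def aDer (d : ℕ) (b : ℝ) : ℕ → ℝ → ℝ
  | 0, _ => 0
  | n+1, θ => 1 + GG d b (AA d b n θ) * aDer d b n θ

lemma den_pos {b : ℝ} (hb : 1 < b) (α : ℝ) : 0 < b^2 + 2*b*Real.cos α + 1 := by
  nlinarith [Real.neg_one_le_cos α]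

lemma hasDerivAt_gg {b : ℝ} (hb : 1 < b) (d : ℕ) (α : ℝ) :
    HasDerivAt (gg d b) (GG d b α) α := by
  have hp : 0 < b + Real.cos α := p_pos hb α
  have hq : HasDerivAt (fun x => Real.sin x / (b + Real.cos x))
      ((Real.cos α * (b + Real.cos α) - Real.sin α * (0 + -Real.sin α)) / (b + Real.cos α)^2) α := by
    exact (Real.hasDerivAt_sin α).div ((hasDerivAt_const α b).add (Real.hasDerivAt_cos α)) hp.ne'
  have htau : HasDerivAt (tau b)
      (1 / (1 + (Real.sin α / (b + Real.cos α))^2) *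
        ((Real.cos α * (b + Real.cos α) - Real.sin α * (0 + -Real.sin α)) / (b + Real.cos α)^2)) α :=
    (Real.hasDerivAt_arctan _).comp α hq
  have hgg : HasDerivAt (fun y => (d:ℝ) * (2 * tau b y - y))
      ((d:ℝ) * (2 * (1 / (1 + (Real.sin α / (b + Real.cos α))^2) *
        ((Real.cos α * (b + Real.cos α) - Real.sin α * (0 + -Real.sin α)) / (b + Real.cos α)^2)) - 1)) α := by
    exact ((htau.const_mul 2).sub (hasDerivAt_id' α)).const_mul (d:ℝ)
  have : HasDerivAt (gg d b) ((d:ℝ) * (2 * (1 / (1 + (Real.sin α / (b + Real.cos α))^2) *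
        ((Real.cos α * (b + Real.cos α) - Real.sin α * (0 + -Real.sin α)) / (b + Real.cos α)^2)) - 1)) α := hgg
  convert this using 1
  rw [GG]
  have hD : (0:ℝ) < b^2 + 2*b*Real.cos α + 1 := den_pos hb α
  have hsc := Real.sin_sq_add_cos_sq α
  have hpne : (b + Real.cos α) ≠ 0 := hp.ne'
  have hDne : (b^2 + 2*b*Real.cos α + 1) ≠ 0 := hD.ne'
  have h1 : 1 + (Real.sin α / (b + Real.cos α))^2
      = (b^2 + 2*b*Real.cos α + 1) / (b + Real.cos α)^2 := by
    field_simp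
    linear_combination hsc
  rw [h1, one_div_div]
  have h2 : (b + Real.cos α)^2 / (b^2 + 2*b*Real.cos α + 1) *
      ((Real.cos α * (b + Real.cos α) - Real.sin α * (0 + -Real.sin α)) / (b + Real.cos α)^2)
      = (Real.cos α * (b + Real.cos α) + Real.sin α ^ 2) / (b^2 + 2*b*Real.cos α + 1) := by
    field_simp
    ring
  rw [h2]
  have h3 : Real.cos α * (b + Real.cos α) + Real.sin α ^ 2 = b * Real.cos α + 1 := by
    linear_combination hsc
  rw [h3]
  linear_combination (-(d:ℝ)) * (mul_inv_cancel₀ hDne)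

lemma hasDerivAt_AA {b : ℝ} (hb : 1 < b) (d n : ℕ) (θ : ℝ) :
    HasDerivAt (AA d b n) (aDer d b n θ) θ := by
  induction n with
  | zero => exact hasDerivAt_const θ 0
  | succ n ih =>
      have : HasDerivAt (fun x => x + gg d b (AA d b n x))
          (1 + GG d b (AA d b n θ) * aDer d b n θ) θ :=
        (hasDerivAt_id θ).add ((hasDerivAt_gg hb d (AA d b n θ)).comp θ ih)
      exact this

lemma GG_le {b : ℝ} {d : ℕ} (hb : 1 < b) (hq : b + 1 ≤ d * (b - 1)) (α : ℝ) :
    GG d b α ≤ -(1 + (2*b/(b+1)^2) * (1 - Real.cos α)) := by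
  have hD : (0:ℝ) < b^2 + 2*b*Real.cos α + 1 := den_pos hb α
  have hc1 : Real.cos α ≤ 1 := Real.cos_le_one α
  have hb1 : (0:ℝ) < (b+1)^2 := by positivity
  rw [GG, neg_le_neg_iff, le_div_iff₀ hD]
  have e1 : (1 + 2*b/(b+1)^2 * (1 - Real.cos α)) * (b^2 + 2*b*Real.cos α + 1)
      = (((b+1)^2 + 2*b*(1 - Real.cos α)) * (b^2 + 2*b*Real.cos α + 1)) / (b+1)^2 := by
    field_simp
  rw [e1, div_le_iff₀ hb1]
  have key : ((b+1)^2 + 2*b*(1 - Real.cos α)) * (b^2 + 2*b*Real.cos α + 1) ≤ (b+1)^2 * ((b+1)^2) := by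
    nlinarith [sq_nonneg (2*b*(1 - Real.cos α))]
  have hN : (b+1)^2 * (b+1)^2 ≤ (d * (b^2-1)) * (b+1)^2 := by
    nlinarith [mul_le_mul_of_nonneg_right hq (by positivity : (0:ℝ) ≤ (b+1)*(b+1)^2)]
  linarith

lemma GG_ge {b : ℝ} {d : ℕ} (hb : 1 < b) (α : ℝ) :
    -(d * (b+1) / (b-1)) ≤ GG d b α := by
  have hD : (0:ℝ) < b^2 + 2*b*Real.cos α + 1 := den_pos hb α
  have hbm : (0:ℝ) < b - 1 := by linarith
  rw [GG, neg_le_neg_iff, div_le_div_iff₀ hD hbm]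
  have hd0 : (0:ℝ) ≤ (d:ℝ) := Nat.cast_nonneg d
  have h1 : (b-1)^2 ≤ b^2+2*b*Real.cos α+1 := by nlinarith [Real.neg_one_le_cos α]
  have h2 : (0:ℝ) ≤ (d:ℝ)*(b+1) := mul_nonneg hd0 (by linarith)
  nlinarith [mul_le_mul_of_nonneg_left h1 h2]

/-! ### Distance to multiples of 2π -/

noncomputable def DD (x : ℝ) : ℝ := |x - 2*π*(round (x/(2*π)) : ℤ)|

lemma DD_nonneg (x : ℝ) : 0 ≤ DD x := abs_nonneg _

lemma two_pi_pos : (0:ℝ) < 2*π := by positivity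

lemma key_rw (x : ℝ) (m : ℤ) : x - 2*π*m = (2*π) * (x/(2*π) - m) := by
  field_simp

lemma abs_key (x : ℝ) (m : ℤ) : |x - 2*π*m| = (2*π) * |x/(2*π) - m| := by
  rw [key_rw x m, abs_mul, abs_of_pos two_pi_pos]

lemma DD_le (x : ℝ) (m : ℤ) : DD x ≤ |x - 2*π*m| := by
  rw [DD, abs_key, abs_key]
  exact mul_le_mul_of_nonneg_left (round_le (x/(2*π)) m) two_pi_pos.le

lemma DD_ge_of {x s : ℝ} (h : ∀ m : ℤ, s ≤ |x - 2*π*m|) : s ≤ DD x := h _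

lemma DD_le_pi (x : ℝ) : DD x ≤ π := by
  rw [DD, abs_key]
  have := abs_sub_round (x/(2*π))
  nlinarith [two_pi_pos, Real.pi_pos]

lemma cos_DD (x : ℝ) : Real.cos (DD x) = Real.cos x := by
  rw [DD, Real.cos_abs,
    show x - 2*π*((round (x/(2*π)):ℤ):ℝ) = x - ((round (x/(2*π)):ℤ):ℝ)*(2*π) from by ring,
    Real.cos_sub_int_mul_two_pi]

lemma one_sub_cos_ge (x : ℝ) : (2/π^2) * DD x^2 ≤ 1 - Real.cos x := by
  rw [← cos_DD x]
  have h1 : |DD x| ≤ π := by rw [_root_.abs_of_nonneg (DD_nonneg x)]; exact DD_le_pi x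
  have := Real.cos_le_one_sub_mul_cos_sq h1
  linarith

lemma abs_arctan_le (x : ℝ) : |Real.arctan x| ≤ |x| := by
  rcases le_total 0 x with h | h
  · have h0 : 0 ≤ Real.arctan x := by
      rw [← Real.arctan_zero]; exact Real.arctan_strictMono.monotone h
    rw [_root_.abs_of_nonneg h0, _root_.abs_of_nonneg h]
    have := Real.le_tan h0 (Real.arctan_lt_pi_div_two x)
    rwa [Real.tan_arctan] at this
  · have h0 : Real.arctan x ≤ 0 := by
      rw [← Real.arctan_zero]; exact Real.arctan_strictMono.monotone h
    rw [_root_.abs_of_nonpos h0, _root_.abs_of_nonpos h]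
    have h1 : 0 ≤ Real.arctan (-x) := by
      rw [← Real.arctan_zero]; exact Real.arctan_strictMono.monotone (by linarith)
    have := Real.le_tan h1 (Real.arctan_lt_pi_div_two (-x))
    rw [Real.tan_arctan] at this
    rw [Real.arctan_neg] at this
    linarith

lemma tau_shift (b β : ℝ) (m : ℤ) : tau b (β + 2*π*m) = tau b β := by
  rw [tau, tau]
  rw [show β + 2*π*m = β + m*(2*π) by ring]
  rw [Real.sin_add_int_mul_two_pi, Real.cos_add_int_mul_two_pi]

lemma gg_shift (d : ℕ) (b β : ℝ) (m : ℤ) :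
    gg d b (β + 2*π*m) = gg d b β - 2*π*m*d := by
  rw [gg, gg, tau_shift]
  ring

lemma gg_small {b : ℝ} (hb : 1 < b) (d : ℕ) (β : ℝ) :
    |gg d b β| ≤ (d*(b+1)/(b-1)) * |β| := by
  have hp : 0 < b + Real.cos β := p_pos hb β
  have hbm : (0:ℝ) < b - 1 := by linarith
  have h1 : |tau b β| ≤ |β| / (b-1) := by
    refine (abs_arctan_le _).trans ?_
    rw [abs_div, abs_of_pos hp, div_le_div_iff₀ hp hbm]
    have hs : |Real.sin β| ≤ |β| := Real.abs_sin_le_abs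
    have hc : b - 1 ≤ b + Real.cos β := by nlinarith [Real.neg_one_le_cos β]
    nlinarith [abs_nonneg (Real.sin β), abs_nonneg β]
  rw [gg]
  have h2 : |(d:ℝ) * (2 * tau b β - β)| = d * |2 * tau b β - β| := by
    rw [abs_mul, Nat.abs_cast]
  rw [h2]
  have h3 : |2 * tau b β - β| ≤ 2 * |tau b β| + |β| := by
    calc |2 * tau b β - β| ≤ |2 * tau b β| + |β| := abs_sub _ _
      _ = 2 * |tau b β| + |β| := by rw [abs_mul]; norm_num
  have h4 : |2 * tau b β - β| ≤ (b+1)/(b-1) * |β| := by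
    have e : 2 * (|β|/(b-1)) + |β| = (b+1)/(b-1) * |β| := by field_simp; ring
    rw [← e]
    linarith
  calc (d:ℝ) * |2 * tau b β - β| ≤ (d:ℝ) * ((b+1)/(b-1) * |β|) := by
        exact mul_le_mul_of_nonneg_left h4 (Nat.cast_nonneg d)
    _ = (d*(b+1)/(b-1)) * |β| := by ring

lemma gg_near {b : ℝ} (hb : 1 < b) (d : ℕ) (α : ℝ) (m : ℤ) :
    |gg d b α + 2*π*m*d| ≤ (d*(b+1)/(b-1)) * |α - 2*π*m| := by
  have h := gg_shift d b (α - 2*π*m) m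
  rw [show α - 2*π*m + 2*π*m = α by ring] at h
  have h2 : gg d b α + 2*π*m*d = gg d b (α - 2*π*m) := by rw [h]; ring
  rw [h2]
  exact gg_small hb d _

lemma consec {b : ℝ} (hb : 1 < b) (d : ℕ) (θ α : ℝ) :
    DD θ ≤ DD (θ + gg d b α) + (d*(b+1)/(b-1)) * DD α := by
  set A' := θ + gg d b α with hA'
  set m : ℤ := round (α/(2*π)) with hm
  set m' : ℤ := round (A'/(2*π)) with hm'
  have h1 : |gg d b α + 2*π*m*d| ≤ (d*(b+1)/(b-1)) * DD α := by
    rw [DD]; exact gg_near hb d α m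
  have h2 : DD A' = |A' - 2*π*m'| := rfl
  have h3 : θ - 2*π*((m' + d*m : ℤ):ℝ) = (A' - 2*π*m') - (gg d b α + 2*π*m*d) := by
    push_cast
    rw [hA']
    ring
  calc DD θ ≤ |θ - 2*π*((m' + d*m : ℤ):ℝ)| := DD_le θ _
    _ ≤ |A' - 2*π*m'| + |gg d b α + 2*π*m*d| := by rw [h3]; exact abs_sub _ _
    _ ≤ DD A' + (d*(b+1)/(b-1)) * DD α := by rw [h2]; linarith


/-! ### The growth estimate -/

noncomputable def bet (d : ℕ) (b s : ℝ) : ℝ :=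
  (2*b/(b+1)^2 * (2/π^2*(s/(1+(d:ℝ)*(b+1)/(b-1)))^2)) * min 1 (2*b/(b+1)^2 * (2/π^2*s^2))

lemma bet_pos {d : ℕ} {b s : ℝ} (hb : 1 < b) (hs : 0 < s) : 0 < bet d b s := by
  have hbm : (0:ℝ) < b - 1 := by linarith
  have hb0 : (0:ℝ) < b := by linarith
  have hK0 : (0:ℝ) ≤ (d:ℝ)*(b+1)/(b-1) := by positivity
  have hK1 : (0:ℝ) < 1 + (d:ℝ)*(b+1)/(b-1) := by linarith
  have h1 : (0:ℝ) < 2*b/(b+1)^2 * (2/π^2*(s/(1+(d:ℝ)*(b+1)/(b-1)))^2) := by positivity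
  have h2 : (0:ℝ) < min 1 (2*b/(b+1)^2 * (2/π^2*s^2)) := by
    apply lt_min one_pos
    positivity
  exact mul_pos h1 h2

set_option maxHeartbeats 1600000 in
lemma growth_main {d : ℕ} {b : ℝ} (hb : 1 < b) (hq : b + 1 ≤ (d:ℝ) * (b - 1)) {θ s : ℝ}
    (hs : 0 < s) (hsD : s ≤ DD θ) :
    ∀ k : ℕ, 1 ≤ k → 1 + ((k:ℝ) - 1) * bet d b s ≤ aDer d b (2*k+1) θ := by
  have hbm : (0:ℝ) < b - 1 := by linarith
  have hb0 : (0:ℝ) < b := by linarith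
  set K : ℝ := (d:ℝ)*(b+1)/(b-1) with hKdef
  have hK0 : (0:ℝ) ≤ K := by positivity
  have hK1 : (0:ℝ) < 1 + K := by linarith
  set c0 : ℝ := 2*b/(b+1)^2 with hc0def
  have hc0 : 0 < c0 := by positivity
  set η : ℝ := 2/π^2*(s/(1+K))^2 with hηdef
  have hη : 0 < η := by positivity
  set σ : ℝ := 2/π^2*s^2 with hσdef
  have hσ : 0 < σ := by positivity
  have hbet : bet d b s = (c0*η) * min 1 (c0*σ) := rfl
  have hbet1 : bet d b s ≤ c0*η := by
    rw [hbet]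
    calc (c0*η) * min 1 (c0*σ) ≤ (c0*η) * 1 :=
          mul_le_mul_of_nonneg_left (min_le_left _ _) (by positivity)
      _ = c0*η := by ring
  have hbet2 : bet d b s ≤ (c0*η) * (c0*σ) :=
    hbet ▸ mul_le_mul_of_nonneg_left (min_le_right _ _) (by positivity)
  have hGGneg1 : ∀ α : ℝ, GG d b α ≤ -1 := by
    intro α
    have h1 := GG_le hb hq α
    have h2 : 0 ≤ c0*(1-Real.cos α) := mul_nonneg hc0.le (by linarith [Real.cos_le_one α])
    rw [← hc0def] at h1
    linarith
  have hrec : ∀ n : ℕ, aDer d b (n+1) θ = 1 + GG d b (AA d b n θ) * aDer d b n θ :=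
    fun n => rfl
  have hArec : ∀ n : ℕ, AA d b (n+1) θ = θ + gg d b (AA d b n θ) := fun n => rfl
  have ha0 : aDer d b 0 θ = 0 := rfl
  have ha1 : aDer d b 1 θ = 1 := by rw [hrec 0, ha0]; ring
  have hAA0 : AA d b 0 θ = 0 := rfl
  have hAA1 : AA d b 1 θ = θ := by
    rw [hArec 0, hAA0, gg]
    simp [tau]
  have vnonneg : ∀ n : ℕ, 0 ≤ 1 - Real.cos (AA d b n θ) := by
    intro n; linarith [Real.cos_le_one (AA d b n θ)]
  have signs : ∀ k : ℕ, 1 ≤ aDer d b (2*k+1) θ ∧ aDer d b (2*k+2) θ ≤ 0 := by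
    intro k
    induction k with
    | zero =>
        constructor
        · norm_num [ha1]
        · have e : aDer d b 2 θ = 1 + GG d b (AA d b 1 θ) * aDer d b 1 θ := hrec 1
          have : aDer d b (2*0+2) θ = aDer d b 2 θ := by norm_num
          rw [this, e, ha1]
          linarith [hGGneg1 (AA d b 1 θ)]
    | succ k ih =>
        have hidx1 : 2*(k+1)+1 = (2*k+2)+1 := by ring
        have hidx2 : 2*(k+1)+2 = ((2*k+2)+1)+1 := by ring
        have h3 : 1 ≤ aDer d b ((2*k+2)+1) θ := by
          rw [hrec (2*k+2)]
          nlinarith [mul_le_mul_of_nonpos_right (hGGneg1 (AA d b (2*k+2) θ)) ih.2]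
        constructor
        · rw [hidx1]; exact h3
        · rw [hidx2, hrec ((2*k+2)+1)]
          nlinarith [mul_le_mul_of_nonneg_right (hGGneg1 (AA d b ((2*k+2)+1) θ)) (by linarith : (0:ℝ) ≤ aDer d b ((2*k+2)+1) θ)]
  have L2 : ∀ k : ℕ,
      (1 + c0*(1 - Real.cos (AA d b (2*k+2) θ)))
        * ((aDer d b (2*k+1) θ - 1) + c0*(1 - Real.cos (AA d b (2*k+1) θ)))
      ≤ aDer d b (2*k+3) θ - 1 := by
    intro k
    set v1 : ℝ := 1 - Real.cos (AA d b (2*k+1) θ) with hv1def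
    set v2 : ℝ := 1 - Real.cos (AA d b (2*k+2) θ) with hv2def
    have hv1 : 0 ≤ v1 := vnonneg _
    have hv2 : 0 ≤ v2 := vnonneg _
    have ha1k : 1 ≤ aDer d b (2*k+1) θ := (signs k).1
    have ha2k : aDer d b (2*k+2) θ ≤ 0 := (signs k).2
    have e2 : aDer d b (2*k+2) θ = 1 + GG d b (AA d b (2*k+1) θ) * aDer d b (2*k+1) θ := by
      rw [show 2*k+2 = (2*k+1)+1 by ring]; exact hrec (2*k+1)
    have e3 : aDer d b (2*k+3) θ = 1 + GG d b (AA d b (2*k+2) θ) * aDer d b (2*k+2) θ := by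
      rw [show 2*k+3 = (2*k+2)+1 by ring]; exact hrec (2*k+2)
    have hg1 := GG_le hb hq (AA d b (2*k+1) θ)
    have hg2 := GG_le hb hq (AA d b (2*k+2) θ)
    rw [← hc0def, ← hv1def] at hg1
    rw [← hc0def, ← hv2def] at hg2
    have step1 : (1 + c0*v1) * aDer d b (2*k+1) θ - 1 ≤ - aDer d b (2*k+2) θ := by
      have h := mul_le_mul_of_nonneg_right hg1 (by linarith : (0:ℝ) ≤ aDer d b (2*k+1) θ)
      rw [e2]
      nlinarith [h, mul_nonneg (mul_nonneg hc0.le hv1) (by linarith : (0:ℝ) ≤ aDer d b (2*k+1) θ)]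

    have step2 : (aDer d b (2*k+1) θ - 1) + c0*v1 ≤ (1 + c0*v1) * aDer d b (2*k+1) θ - 1 := by
      nlinarith [mul_nonneg (mul_nonneg hc0.le hv1) (by linarith : (0:ℝ) ≤ aDer d b (2*k+1) θ - 1)]
    have step3 : (1 + c0*v2) * (- aDer d b (2*k+2) θ)
        ≤ GG d b (AA d b (2*k+2) θ) * aDer d b (2*k+2) θ := by
      nlinarith [mul_nonneg (neg_nonneg.2 ha2k)
        (neg_nonneg.2 (by linarith : GG d b (AA d b (2*k+2) θ) + (1 + c0*v2) ≤ 0))]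
    have h4 : (1 + c0*v2) * ((aDer d b (2*k+1) θ - 1) + c0*v1)
        ≤ (1 + c0*v2) * (- aDer d b (2*k+2) θ) := by
      apply mul_le_mul_of_nonneg_left (by linarith) (by nlinarith [mul_nonneg hc0.le hv2])
    rw [e3]
    linarith
  have L3 : ∀ n : ℕ, η ≤ 1 - Real.cos (AA d b (n+1) θ) ∨ η ≤ 1 - Real.cos (AA d b (n+2) θ) := by
    intro n
    by_contra hcon
    push_neg at hcon
    obtain ⟨h1, h2⟩ := hcon
    have hDb : ∀ α : ℝ, 1 - Real.cos α < η → DD α < s/(1+K) := by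
      intro α hα
      have g1 := one_sub_cos_ge α
      have g2 : (2/π^2) * DD α^2 < (2/π^2)*(s/(1+K))^2 := by
        rw [hηdef] at hα; linarith
      have c2 : (0:ℝ) < 2/π^2 := by positivity
      have g3 : DD α^2 < (s/(1+K))^2 := by nlinarith
      exact lt_of_pow_lt_pow_left₀ 2 (by positivity) g3
    have d1 := hDb _ h1
    have d2 := hDb _ h2
    have hc := consec hb d θ (AA d b (n+1) θ)
    rw [← hArec (n+1), ← hKdef] at hc
    have hm : K * DD (AA d b (n+1) θ) ≤ K * (s/(1+K)) := mul_le_mul_of_nonneg_left d1.le hK0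
    have heq : s/(1+K) + K*(s/(1+K)) = s := by field_simp
    linarith
  have hv1θ : σ ≤ 1 - Real.cos (AA d b 1 θ) := by
    rw [hAA1]
    have g1 := one_sub_cos_ge θ
    have g2 : s^2 ≤ DD θ^2 := pow_le_pow_left₀ hs.le hsD 2
    have c2 : (0:ℝ) < 2/π^2 := by positivity
    rw [hσdef]
    nlinarith
  have hw1 : c0*σ ≤ aDer d b 3 θ - 1 := by
    have h := L2 0
    norm_num [ha1] at h
    set v1 : ℝ := 1 - Real.cos (AA d b 1 θ)
    set v2 : ℝ := 1 - Real.cos (AA d b 2 θ)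
    have hv1 : 0 ≤ v1 := vnonneg 1
    have hv2 : 0 ≤ v2 := vnonneg 2
    nlinarith [mul_nonneg (mul_nonneg hc0.le hv2) (mul_nonneg hc0.le hv1),
      mul_le_mul_of_nonneg_left hv1θ hc0.le]
  have inv : ∀ k : ℕ, 1 ≤ k →
      c0*σ ≤ aDer d b (2*k+1) θ - 1 ∧
      c0*σ + ((k:ℝ)-1)*bet d b s ≤ aDer d b (2*k+1) θ - 1 := by
    intro k hk
    induction k with
    | zero => omega
    | succ k ih =>
        rcases Nat.eq_zero_or_pos k with rfl | hkpos
        · constructor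
          · norm_num; exact hw1
          · norm_num; exact hw1
        · obtain ⟨ih1, ih2⟩ := ih hkpos
          have hL2 := L2 k
          have hL3 := L3 (2*k)
          have hv1 : 0 ≤ 1 - Real.cos (AA d b (2*k+1) θ) := vnonneg _
          have hv2 : 0 ≤ 1 - Real.cos (AA d b (2*k+2) θ) := vnonneg _
          have hwk : 0 ≤ aDer d b (2*k+1) θ - 1 := by linarith [(signs k).1]
          have hidx : 2*(k+1)+1 = 2*k+3 := by ring
          have hgrow : aDer d b (2*k+1) θ - 1 + bet d b s ≤ aDer d b (2*k+3) θ - 1 := by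
            rcases hL3 with hA | hB
            · have : (aDer d b (2*k+1) θ - 1) + c0*η
                  ≤ (1 + c0*(1 - Real.cos (AA d b (2*k+2) θ)))
                    * ((aDer d b (2*k+1) θ - 1) + c0*(1 - Real.cos (AA d b (2*k+1) θ))) := by
                have hmono : c0*η ≤ c0*(1 - Real.cos (AA d b (2*k+1) θ)) := by
                  rw [show (2:ℕ)*k+1 = 2*k+1 from rfl]
                  exact mul_le_mul_of_nonneg_left (by exact_mod_cast hA) hc0.le
                nlinarith [mul_nonneg (mul_nonneg hc0.le hv2)
                  (by have := mul_nonneg hc0.le hv1; linarith :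
                    (0:ℝ) ≤ (aDer d b (2*k+1) θ - 1) + c0*(1 - Real.cos (AA d b (2*k+1) θ)))]
              linarith [hL2, hbet1]
            · have : (aDer d b (2*k+1) θ - 1) + (c0*η)*(c0*σ)
                  ≤ (1 + c0*(1 - Real.cos (AA d b (2*k+2) θ)))
                    * ((aDer d b (2*k+1) θ - 1) + c0*(1 - Real.cos (AA d b (2*k+1) θ))) := by
                have hmono : c0*η ≤ c0*(1 - Real.cos (AA d b (2*k+2) θ)) :=
                  mul_le_mul_of_nonneg_left (by exact_mod_cast hB) hc0.le
                nlinarith [mul_nonneg hc0.le hv1,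
                  mul_le_mul_of_nonneg_left ih1 (by positivity : (0:ℝ) ≤ c0*η),
                  mul_nonneg (by linarith :
                    (0:ℝ) ≤ c0*(1 - Real.cos (AA d b (2*k+2) θ)) - c0*η) hwk,
                  mul_nonneg (mul_nonneg hc0.le hv2) (mul_nonneg hc0.le hv1)]
              linarith [hL2, hbet2]
          constructor
          · rw [hidx]; linarith [bet_pos (d := d) hb hs]
          · rw [hidx]
            push_cast
            have : c0*σ + ((k:ℝ)-1)*bet d b s + bet d b s ≤ aDer d b (2*k+3) θ - 1 := by
              linarith
            calc c0*σ + ((k:ℝ)+1-1)*bet d b s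
                = c0*σ + ((k:ℝ)-1)*bet d b s + bet d b s := by ring
              _ ≤ aDer d b (2*k+3) θ - 1 := this
  intro k hk
  have h := (inv k hk).2
  have : 0 ≤ c0*σ := by positivity
  linarith


/-! ### Reaching -1 on any good interval -/

lemma reach {d : ℕ} {b : ℝ} (hb : 1 < b) (hq : b + 1 ≤ (d:ℝ) * (b - 1)) {x y s : ℝ}
    (hxy : x < y) (hs : 0 < s) (hI : ∀ θ ∈ Set.Icc x y, s ≤ DD θ) :
    ∃ N : ℕ, 1 ≤ N ∧ ∃ θ ∈ Set.Icc x y, ∃ m : ℤ, AA d b N θ = π + 2*π*m := by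
  have hβ : 0 < bet d b s := bet_pos hb hs
  obtain ⟨k₀, hk₀⟩ := exists_nat_ge (2*π / (bet d b s * (y - x)))
  set k : ℕ := k₀ + 1 with hk
  set N : ℕ := 2*k+1 with hN
  have hdiff : Differentiable ℝ (AA d b N) := fun θ => (hasDerivAt_AA hb d N θ).differentiableAt
  have hderiv : ∀ θ : ℝ, deriv (AA d b N) θ = aDer d b N θ := fun θ => (hasDerivAt_AA hb d N θ).deriv
  have hC : ∀ θ ∈ interior (Set.Icc x y), 1 + ((k:ℝ)-1) * bet d b s ≤ deriv (AA d b N) θ := by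
    intro θ hθ
    rw [hderiv]
    rw [interior_Icc] at hθ
    exact growth_main hb hq hs (hI θ (Set.Ioo_subset_Icc_self hθ)) k (by omega)
  have hMVT := (convex_Icc x y).mul_sub_le_image_sub_of_le_deriv
      hdiff.continuous.continuousOn hdiff.differentiableOn hC
      x (Set.left_mem_Icc.2 hxy.le) y (Set.right_mem_Icc.2 hxy.le) hxy.le
  have hlen : 2*π ≤ AA d b N y - AA d b N x := by
    have h1 : 2*π ≤ ((k:ℝ)-1) * (bet d b s * (y-x)) := by
      have hk' : ((k:ℝ)-1) = (k₀:ℝ) := by rw [hk]; push_cast; ring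
      rw [hk']
      have hpos : (0:ℝ) < bet d b s * (y - x) := mul_pos hβ (by linarith)
      calc 2*π = (2*π / (bet d b s * (y - x))) * (bet d b s * (y-x)) :=
            (div_mul_cancel₀ _ hpos.ne').symm
        _ ≤ (k₀:ℝ) * (bet d b s * (y-x)) :=
            mul_le_mul_of_nonneg_right hk₀ hpos.le
    nlinarith [hMVT, hxy, hβ]
  set m : ℤ := ⌈(AA d b N x - π)/(2*π)⌉ with hm
  have hm1 : AA d b N x ≤ π + 2*π*m := by
    have h := Int.le_ceil ((AA d b N x - π)/(2*π))
    rw [div_le_iff₀ two_pi_pos] at h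
    rw [← hm] at h
    linarith
  have hm2 : π + 2*π*m ≤ AA d b N y := by
    have h := Int.ceil_lt_add_one ((AA d b N x - π)/(2*π))
    rw [← hm] at h
    have h' : (m:ℝ)*(2*π) < ((AA d b N x - π)/(2*π) + 1)*(2*π) :=
      mul_lt_mul_of_pos_right h two_pi_pos
    rw [add_mul, div_mul_cancel₀ _ two_pi_pos.ne'] at h'
    linarith
  have hIVT := intermediate_value_Icc hxy.le (hdiff.continuous.continuousOn (s := Set.Icc x y))
  have hmem : (π + 2*π*(m:ℝ)) ∈ Set.Icc (AA d b N x) (AA d b N y) := ⟨hm1, hm2⟩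
  obtain ⟨θstar, hθmem, hval⟩ := hIVT hmem
  exact ⟨N, by omega, θstar, hθmem, m, hval⟩

/-! ### Finding a good interval near any angle -/

lemma interval_exists (θ₀ ε : ℝ) (h1 : 0 < ε) (h2 : ε ≤ π) :
    ∃ x y : ℝ, x < y ∧ Set.Icc x y ⊆ Set.Icc θ₀ (θ₀+ε) ∧
      ∀ θ ∈ Set.Icc x y, ε/8 ≤ DD θ := by
  set M : ℤ := ⌈θ₀/(2*π)⌉ with hM
  have hpge : θ₀ ≤ 2*π*(M:ℝ) := by
    have h := Int.le_ceil (θ₀/(2*π))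
    rw [← hM] at h
    rw [div_le_iff₀ two_pi_pos] at h
    linarith
  have hplt : 2*π*(M:ℝ) < θ₀ + 2*π := by
    have h := Int.ceil_lt_add_one (θ₀/(2*π))
    rw [← hM] at h
    have h' : (M:ℝ)*(2*π) < (θ₀/(2*π)+1)*(2*π) := mul_lt_mul_of_pos_right h two_pi_pos
    rw [add_mul, div_mul_cancel₀ _ two_pi_pos.ne'] at h'
    linarith
  by_cases hc : θ₀ + ε/2 ≤ 2*π*(M:ℝ)
  · refine ⟨θ₀+ε/8, θ₀+3*ε/8, by linarith, ?_, ?_⟩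
    · intro θ hθ
      exact ⟨by linarith [hθ.1], by linarith [hθ.2]⟩
    · intro θ hθ
      apply DD_ge_of
      intro m
      rcases le_or_gt m (M-1) with hm | hm
      · have hm' : (m:ℝ) ≤ (M:ℝ) - 1 := by
          have : (m:ℝ) ≤ ((M-1 : ℤ):ℝ) := by exact_mod_cast hm
          push_cast at this
          linarith
        have hle : 2*π*(m:ℝ) ≤ 2*π*(M:ℝ) - 2*π := by nlinarith [two_pi_pos]
        exact le_abs.2 (Or.inl (by linarith [hθ.1]))
      · have hmz : M ≤ m := by omega
        have hm' : (M:ℝ) ≤ (m:ℝ) := by exact_mod_cast hmz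
        have : θ₀ + ε/2 ≤ 2*π*(m:ℝ) := by nlinarith [two_pi_pos]
        exact le_abs.2 (Or.inr (by linarith [hθ.2]))
  · push_neg at hc
    refine ⟨θ₀+5*ε/8, θ₀+7*ε/8, by linarith, ?_, ?_⟩
    · intro θ hθ
      exact ⟨by linarith [hθ.1], by linarith [hθ.2]⟩
    · intro θ hθ
      apply DD_ge_of
      intro m
      rcases le_or_gt m M with hm | hm
      · have hm' : (m:ℝ) ≤ (M:ℝ) := by exact_mod_cast hm
        have : 2*π*(m:ℝ) < θ₀ + ε/2 := by nlinarith [two_pi_pos]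
        exact le_abs.2 (Or.inl (by linarith [hθ.1]))
      · have hmz : M + 1 ≤ m := by omega
        have hm' : (M:ℝ)+1 ≤ (m:ℝ) := by
          have : ((M+1 : ℤ):ℝ) ≤ (m:ℝ) := by exact_mod_cast hmz
          push_cast at this
          linarith
        have : θ₀ + 2*π ≤ 2*π*(m:ℝ) := by nlinarith [two_pi_pos]
        exact le_abs.2 (Or.inr (by nlinarith [Real.pi_pos, hθ.2]))

/-! ### Distance estimate on the circle -/

lemma norm_exp_sub_one_le (z : ℝ) : ‖Complex.exp ((z:ℝ)*I) - 1‖ ≤ |z| := by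
  rw [Complex.exp_mul_I]
  have h0 : Complex.cos (z:ℂ) + Complex.sin (z:ℂ) * I - 1
      = ((Real.cos z - 1 : ℝ):ℂ) + ((Real.sin z : ℝ):ℂ)*I := by
    rw [← Complex.ofReal_cos, ← Complex.ofReal_sin]
    push_cast
    ring
  rw [h0, Complex.norm_add_mul_I]
  have key : (Real.cos z - 1)^2 + (Real.sin z)^2 ≤ z^2 := by
    nlinarith [Real.one_sub_sq_div_two_le_cos (x := z), Real.sin_sq_add_cos_sq z,
      Real.cos_le_one z]
  calc Real.sqrt ((Real.cos z - 1)^2 + (Real.sin z)^2) ≤ Real.sqrt (z^2) :=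
        Real.sqrt_le_sqrt key
    _ = |z| := Real.sqrt_sq_eq_abs z

lemma dist_exp_le (a c : ℝ) :
    dist (Complex.exp ((a:ℝ)*I)) (Complex.exp ((c:ℝ)*I)) ≤ |a - c| := by
  have h : Complex.exp ((a:ℝ)*I) - Complex.exp ((c:ℝ)*I)
      = Complex.exp ((c:ℝ)*I) * (Complex.exp (((a-c:ℝ))*I) - 1) := by
    rw [mul_sub, hE, mul_one]
    rw [show c + (a-c) = a by ring]
  rw [Complex.dist_eq, h, norm_mul, Complex.norm_exp_ofReal_mul_I, one_mul]
  exact norm_exp_sub_one_le (a-c)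

end IsingAux

/-- For `d ≥ 2` and `b ≥ (d+1)/(d−1)`, the zero parameters on the unit circle
(of the anti-ferromagnetic Ising partition function of rooted Cayley trees of
down-degree `d`), i.e. the `λ ∈ S¹` with `f_λ^n(1) = −1` for some `n ≥ 1`,
are dense in the unit circle. -/
theorem stmt0 (d : ℕ) (hd : 2 ≤ d) (b : ℝ)
    (hb : ((d : ℝ) + 1) / ((d : ℝ) - 1) ≤ b) :
    Metric.sphere (0 : ℂ) 1 ⊆
      closure {lam : ℂ | lam ∈ Metric.sphere (0 : ℂ) 1 ∧
        ∃ n : ℕ, 1 ≤ n ∧ (fIsing d b lam)^[n] 1 = -1} := by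
  open IsingAux in
  intro lam hlam
  rw [Metric.mem_closure_iff]
  intro ε hε
  have hdR : (2:ℝ) ≤ (d:ℝ) := by exact_mod_cast hd
  have hden : (0:ℝ) < (d:ℝ) - 1 := by linarith
  have h1b : 1 < ((d:ℝ)+1)/((d:ℝ)-1) := by
    rw [lt_div_iff₀ hden]; linarith
  have hb1 : 1 < b := lt_of_lt_of_le h1b hb
  have hq : b + 1 ≤ (d:ℝ)*(b-1) := by
    rw [div_le_iff₀ hden] at hb
    nlinarith
  have habs : ‖lam‖ = 1 := by
    exact mem_sphere_zero_iff_norm.mp hlam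
  set θ₀ : ℝ := Complex.arg lam with hθ₀
  have hlam' : lam = Complex.exp ((θ₀:ℝ) * I) := by
    conv_lhs => rw [← Complex.norm_mul_exp_arg_mul_I lam]
    rw [habs]
    simp [hθ₀]
  set ε' : ℝ := min (ε/2) Real.pi with hε'def
  have hε' : 0 < ε' := lt_min (by linarith) Real.pi_pos
  obtain ⟨x, y, hxy, hsub, hDD⟩ := interval_exists θ₀ ε' hε' (min_le_right _ _)
  obtain ⟨N, hN1, θstar, hθmem, m, hval⟩ :=
    reach (d := d) hb1 hq hxy (by positivity : (0:ℝ) < ε'/8) hDD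
  refine ⟨Complex.exp ((θstar:ℝ)*I), ⟨?_, N, hN1, ?_⟩, ?_⟩
  · rw [mem_sphere_zero_iff_norm, Complex.norm_exp_ofReal_mul_I]
  · rw [IsingAux.iter hb1 d θstar N, hval]
    have e : ((Real.pi + 2*Real.pi*(m:ℝ) : ℝ):ℂ)*I = ↑Real.pi*I + ↑m*(2*↑Real.pi*I) := by
      push_cast
      ring
    rw [e, Complex.exp_add, Complex.exp_pi_mul_I, Complex.exp_int_mul_two_pi_mul_I]
    ring
  · rw [hlam']
    have hθs := hsub hθmem
    have h1 : |θ₀ - θstar| ≤ ε' := by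
      rw [abs_le]
      constructor
      · linarith [hθs.2]
      · linarith [hθs.1]
    calc dist (Complex.exp ((θ₀:ℝ)*I)) (Complex.exp ((θstar:ℝ)*I)) ≤ |θ₀ - θstar| :=
          dist_exp_le θ₀ θstar
      _ ≤ ε' := h1
      _ ≤ ε/2 := min_le_left _ _
      _ < ε := by linarith
end

section
/- Let d ≥ 2 be an integer and b > 1 a real number. For a finite nonempty word w = (k_1,…,k_n) with k_j ∈ {1,…,d} and λ ∈ ℂ, let f_{λ,w} denote the composition f_{λ,k_n} ∘ ⋯ ∘ f_{λ,k_1}. Then the set of λ ∈ ℂ for which there exist two distinct finite nonempty words w₁ ≠ w₂ over {1,…,d} such that f_{λ,w₁}(z) = f_{λ,w₂}(z) for every z ∈ ℂ at which both compositions are defined (i.e. no intermediate denominator vanishes) is countable. In particular, for all but countably many λ ∈ ℂ the semigroup generated by f_{λ,1}, …, f_{λ,d} under composition is freely generated by these maps. -/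
open Complex

/-- The semigroup generator `f_{λ,k}(z) = λ·((z+b)/(bz+1))^k`. -/
noncomputable def fl (b : ℝ) (lam : ℂ) (k : ℕ) (z : ℂ) : ℂ :=
  lam * ((z + (b : ℂ)) / ((b : ℂ) * z + 1)) ^ k

/-- The composition `f_{λ,k_n} ∘ ⋯ ∘ f_{λ,k_1}` applied to `z`, for the word `l = [k₁,…,kₙ]`. -/
noncomputable def sgComp (b : ℝ) (lam : ℂ) (l : List ℕ) (z : ℂ) : ℂ :=
  l.foldl (fun w k => fl b lam k w) z

/-- The composition along the word `l` is defined at `z`: no intermediate denominator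
vanishes. -/
def sgDefined (b : ℝ) (lam : ℂ) : List ℕ → ℂ → Prop
  | [], _ => True
  | k :: l, z => (b : ℂ) * z + 1 ≠ 0 ∧ sgDefined b lam l (fl b lam k z)

noncomputable def sgU (b : ℝ) (d : ℕ) : ℝ := min 1 ((b-1)/2^d)
noncomputable def sgX (b : ℝ) (d : ℕ) : ℝ := (b^2-1)/(sgU b d)
noncomputable def sgT (b : ℝ) (d : ℕ) : ℝ := b^d * sgX b d
noncomputable def rg (b : ℝ) (d : ℕ) (k : ℕ) (x : ℝ) : ℝ := sgT b d * ((x+b)/(b*x+1))^k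
noncomputable def rcomp (b : ℝ) (d : ℕ) (l : List ℕ) (x : ℝ) : ℝ :=
  l.foldl (fun y k => rg b d k y) x

section Real
variable {b : ℝ} {d : ℕ} (hb : 1 < b)
include hb

lemma sgU_pos : 0 < sgU b d := by
  have h : (0:ℝ) < (b-1)/2^d := by
    apply div_pos (by linarith) (by positivity)
  exact lt_min one_pos h

omit hb in
lemma sgU_le_one : sgU b d ≤ 1 := min_le_left _ _

omit hb in
lemma sgU_le : 2^d * sgU b d ≤ b - 1 := by
  have h : sgU b d ≤ (b-1)/2^d := min_le_right _ _
  have h2 : (0:ℝ) < 2^d := by positivity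
  calc 2^d * sgU b d ≤ 2^d * ((b-1)/2^d) := by nlinarith
    _ = b - 1 := by field_simp

lemma sgX_pos : 0 < sgX b d := by
  have h1 : (0:ℝ) < b^2 - 1 := by nlinarith
  exact div_pos h1 (sgU_pos hb)

lemma sgU_mul_sgX : sgU b d * sgX b d = b^2 - 1 := by
  rw [sgX, mul_div_cancel₀]; exact (sgU_pos hb).ne'

lemma sgT_pos : 0 < sgT b d := by
  have hX := sgX_pos (d := d) hb
  have h : (0:ℝ) < b^d := by positivity
  exact mul_pos h hX

lemma sgX_le_sgT : sgX b d ≤ sgT b d := by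
  have hX := sgX_pos (d := d) hb
  have h1 : (1:ℝ) ≤ b^d := one_le_pow₀ hb.le
  rw [sgT]
  nlinarith [mul_le_mul_of_nonneg_right h1 hX.le]

lemma den_pos {x : ℝ} (hx : 0 ≤ x) : 0 < b*x+1 := by nlinarith

lemma H_pos {x : ℝ} (hx : 0 ≤ x) : 0 < (x+b)/(b*x+1) :=
  div_pos (by nlinarith) (den_pos hb hx)

lemma H_gt {x : ℝ} (hx : 0 ≤ x) : 1/b < (x+b)/(b*x+1) := by
  rw [div_lt_div_iff₀ (by linarith) (den_pos hb hx)]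
  nlinarith

lemma H_le_of_ge {x : ℝ} (hx : sgX b d ≤ x) : (x+b)/(b*x+1) ≤ (1+sgU b d)/b := by
  have hu := sgU_pos (d := d) hb
  have hX := sgX_pos (d := d) hb
  have hx0 : (0:ℝ) ≤ x := le_trans hX.le hx
  have hux : sgU b d * sgX b d = b^2 - 1 := sgU_mul_sgX hb
  rw [div_le_div_iff₀ (den_pos hb hx0) (by linarith)]
  have h : sgU b d * sgX b d ≤ sgU b d * x := by nlinarith
  have h2 : b^2 - 1 ≤ sgU b d * x := by linarith [hux ▸ h]
  have h3 := mul_le_mul_of_nonneg_left h2 (by linarith : (0:ℝ) ≤ b)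
  nlinarith [mul_nonneg (by linarith : (0:ℝ) ≤ b - 1) (by nlinarith : (0:ℝ) ≤ b^2-1)]

lemma H_anti {x y : ℝ} (hx : 0 ≤ x) (hxy : x < y) : (y+b)/(b*y+1) < (x+b)/(b*x+1) := by
  rw [div_lt_div_iff₀ (den_pos hb (by linarith)) (den_pos hb hx)]
  nlinarith [mul_pos (show (0:ℝ) < b^2-1 by nlinarith) (sub_pos.2 hxy)]

omit hb in
lemma bern (u : ℝ) (hu : 0 ≤ u) (hu1 : u ≤ 1) : ∀ n : ℕ, (1+u)^n ≤ 1+(2^n-1)*u := by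
  intro n; induction n with
  | zero => simp
  | succ n ih =>
    have h2 : (1:ℝ) ≤ 2^n := one_le_pow₀ (by norm_num)
    have hp : (0:ℝ) ≤ (1+u)^n := by positivity
    have step : (1+u)^(n+1) ≤ (1+(2^n-1)*u) * (1+u) := by
      rw [pow_succ]
      exact mul_le_mul_of_nonneg_right ih (by linarith)
    have : (1+(2^n-1)*u) * (1+u) ≤ 1+(2^(n+1)-1)*u := by
      rw [pow_succ]
      nlinarith [mul_nonneg hu (sub_nonneg.2 hu1)]
    linarith

lemma one_add_u_pow_lt {k : ℕ} (hk : k ≤ d) : (1+sgU b d)^k < b := by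
  have hu := sgU_pos (d := d) hb
  have h1 := bern (sgU b d) hu.le (sgU_le_one (b := b) (d := d)) k
  have h2 : (2:ℝ)^k ≤ 2^d := pow_le_pow_right₀ (by norm_num) hk
  have h3 := sgU_le (b := b) (d := d)
  have h4 : ((2:ℝ)^k - 1) * sgU b d < 2^d * sgU b d := by nlinarith
  nlinarith

lemma rg_pos {x : ℝ} (hx : 0 ≤ x) (k : ℕ) : 0 < rg b d k x :=
  mul_pos (sgT_pos hb) (pow_pos (H_pos hb hx) k)

omit hb in
lemma rg_zero (k : ℕ) : rg b d k 0 = sgT b d * b^k := by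
  simp [rg]

lemma rg_lower {k : ℕ} {x : ℝ} (hk1 : 1 ≤ k) (hx : sgX b d ≤ x) :
    sgT b d / b^k < rg b d k x := by
  have hX := sgX_pos (d := d) hb
  have hx0 : (0:ℝ) ≤ x := le_trans hX.le hx
  have h1 : (1/b)^k < ((x+b)/(b*x+1))^k :=
    pow_lt_pow_left₀ (H_gt hb hx0) (by positivity) (by omega)
  have hT := sgT_pos (d := d) hb
  calc sgT b d / b^k = sgT b d * (1/b)^k := by
        rw [one_div_pow, mul_one_div]
    _ < rg b d k x := by
        exact mul_lt_mul_of_pos_left h1 hT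

lemma rg_upper {k : ℕ} {x : ℝ} (hkd : k ≤ d) (hx : sgX b d ≤ x) :
    rg b d k x < sgT b d * b / b^k := by
  have hX := sgX_pos (d := d) hb
  have hx0 : (0:ℝ) ≤ x := le_trans hX.le hx
  have h1 : ((x+b)/(b*x+1))^k ≤ ((1+sgU b d)/b)^k :=
    pow_le_pow_left₀ (H_pos hb hx0).le (H_le_of_ge hb hx) k
  have h2 : ((1+sgU b d)/b)^k < b/b^k := by
    rw [div_pow, div_lt_div_iff₀ (by positivity) (by positivity)]
    exact mul_lt_mul_of_pos_right (one_add_u_pow_lt hb hkd) (by positivity)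
  have hT := sgT_pos (d := d) hb
  calc rg b d k x ≤ sgT b d * ((1+sgU b d)/b)^k := mul_le_mul_of_nonneg_left h1 hT.le
    _ < sgT b d * (b/b^k) := mul_lt_mul_of_pos_left h2 hT
    _ = sgT b d * b / b^k := by ring

lemma rg_lt_sgT {k : ℕ} {x : ℝ} (hk1 : 1 ≤ k) (hkd : k ≤ d) (hx : sgX b d ≤ x) :
    rg b d k x < sgT b d := by
  have h := rg_upper hb hkd hx
  have hT := sgT_pos (d := d) hb
  have hbk : b ≤ b^k := by
    calc b = b^1 := (pow_one b).symm
      _ ≤ b^k := pow_le_pow_right₀ hb.le hk1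
  have : sgT b d * b / b^k ≤ sgT b d := by
    rw [div_le_iff₀ (by positivity)]
    nlinarith
  linarith

lemma sgX_le_rg {k : ℕ} {x : ℝ} (hkd : k ≤ d) (hx : sgX b d ≤ x) :
    sgX b d ≤ rg b d k x := by
  have hX := sgX_pos (d := d) hb
  have hx0 : (0:ℝ) ≤ x := le_trans hX.le hx
  have h1 : ((1:ℝ)/b)^d ≤ ((x+b)/(b*x+1))^k := by
    calc ((1:ℝ)/b)^d ≤ (1/b)^k := by
          apply pow_le_pow_of_le_one (by positivity) _ hkd
          rw [div_le_one (by linarith)]; linarith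
      _ ≤ ((x+b)/(b*x+1))^k := pow_le_pow_left₀ (by positivity) (H_gt hb hx0).le k
  have hT := sgT_pos (d := d) hb
  have key : sgT b d * (1/b)^d = sgX b d := by
    rw [sgT, one_div_pow]
    field_simp
  calc sgX b d = sgT b d * (1/b)^d := key.symm
    _ ≤ rg b d k x := mul_le_mul_of_nonneg_left h1 hT.le

lemma rg_disjoint {k₁ k₂ : ℕ} {x₁ x₂ : ℝ} (hk1 : 1 ≤ k₁) (hk12 : k₁ < k₂) (hk2d : k₂ ≤ d)
    (hx1 : sgX b d ≤ x₁) (hx2 : sgX b d ≤ x₂) : rg b d k₂ x₂ < rg b d k₁ x₁ := by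
  have h1 := rg_upper hb hk2d hx2
  have h2 := rg_lower hb hk1 hx1
  have hT := sgT_pos (d := d) hb
  have hmid : sgT b d * b / b^k₂ ≤ sgT b d / b^k₁ := by
    rw [div_le_div_iff₀ (by positivity) (by positivity)]
    have : b^(k₁+1) ≤ b^k₂ := pow_le_pow_right₀ hb.le hk12
    rw [pow_succ] at this
    nlinarith
  linarith

lemma rg_inj {k : ℕ} {x y : ℝ} (hk1 : 1 ≤ k) (hx : 0 ≤ x) (hy : 0 ≤ y)
    (h : rg b d k x = rg b d k y) : x = y := by
  by_contra hne
  have hT := sgT_pos (d := d) hb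
  rcases lt_or_gt_of_ne hne with hlt | hlt
  · have h1 := H_anti hb hx hlt
    have h2 : ((y+b)/(b*y+1))^k < ((x+b)/(b*x+1))^k :=
      pow_lt_pow_left₀ h1 (H_pos hb (by linarith)).le (by omega)
    have : rg b d k y < rg b d k x := mul_lt_mul_of_pos_left h2 hT
    linarith
  · have h1 := H_anti hb hy hlt
    have h2 : ((x+b)/(b*x+1))^k < ((y+b)/(b*y+1))^k :=
      pow_lt_pow_left₀ h1 (H_pos hb (by linarith)).le (by omega)
    have : rg b d k x < rg b d k y := mul_lt_mul_of_pos_left h2 hT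
    linarith

omit hb in
lemma rcomp_nil (x : ℝ) : rcomp b d [] x = x := rfl

omit hb in
lemma rcomp_cons (k : ℕ) (l : List ℕ) (x : ℝ) :
    rcomp b d (k :: l) x = rcomp b d l (rg b d k x) := rfl

omit hb in
lemma rcomp_concat (l : List ℕ) (k : ℕ) (x : ℝ) :
    rcomp b d (l ++ [k]) x = rg b d k (rcomp b d l x) := by
  simp [rcomp, List.foldl_append]

lemma rcomp_nonneg : ∀ (l : List ℕ) (x : ℝ), 0 ≤ x → 0 ≤ rcomp b d l x := by
  intro l
  induction l with
  | nil => intro x hx; exact hx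
  | cons k l ih =>
    intro x hx
    rw [rcomp_cons]
    exact ih _ (rg_pos hb hx k).le

lemma rinv : ∀ (w : List ℕ), (∀ k ∈ w, 1 ≤ k ∧ k ≤ d) →
    (w = [] ∧ rcomp b d w 0 = 0) ∨ (w ≠ [] ∧ sgX b d ≤ rcomp b d w 0) := by
  intro w
  induction w using List.reverseRecOn with
  | nil => intro _; exact Or.inl ⟨rfl, rfl⟩
  | append_singleton u k ih =>
    intro hw
    have hk : 1 ≤ k ∧ k ≤ d := hw k (by simp)
    have hu : ∀ j ∈ u, 1 ≤ j ∧ j ≤ d := fun j hj => hw j (by simp [hj])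
    right
    refine ⟨by simp, ?_⟩
    rw [rcomp_concat]
    rcases ih hu with ⟨-, h0⟩ | ⟨-, hX⟩
    · rw [h0, rg_zero]
      have hT := sgT_pos (d := d) hb
      have hXT := sgX_le_sgT (d := d) hb
      have h1 : (1:ℝ) ≤ b^k := one_le_pow₀ hb.le
      nlinarith
    · exact sgX_le_rg hb hk.2 hX

lemma rdistinct : ∀ (n : ℕ) (w₁ w₂ : List ℕ), w₁.length + w₂.length ≤ n →
    (∀ k ∈ w₁, 1 ≤ k ∧ k ≤ d) → (∀ k ∈ w₂, 1 ≤ k ∧ k ≤ d) → w₁ ≠ w₂ →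
    rcomp b d w₁ 0 ≠ rcomp b d w₂ 0 := by
  intro n
  induction n with
  | zero =>
    intro w₁ w₂ hlen _ _ hne
    simp only [Nat.le_zero, Nat.add_eq_zero, List.length_eq_zero_iff] at hlen
    exact absurd (hlen.1.trans hlen.2.symm) hne
  | succ n ih =>
    intro w₁ w₂ hlen h1 h2 hne heq
    have hX := sgX_pos (d := d) hb
    rcases w₁.eq_nil_or_concat with rfl | ⟨u₁, k₁, hw1⟩
    · rcases w₂.eq_nil_or_concat with rfl | ⟨u₂, k₂, hw2⟩
      · exact hne rfl
      rw [List.concat_eq_append] at hw2; subst hw2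
      rw [rcomp_nil, rcomp_concat] at heq
      have := rg_pos (d := d) hb (rcomp_nonneg (d := d) hb u₂ 0 le_rfl) k₂
      linarith
    rw [List.concat_eq_append] at hw1; subst hw1
    rcases w₂.eq_nil_or_concat with rfl | ⟨u₂, k₂, hw2⟩
    · rw [rcomp_nil, rcomp_concat] at heq
      have := rg_pos (d := d) hb (rcomp_nonneg (d := d) hb u₁ 0 le_rfl) k₁
      linarith
    rw [List.concat_eq_append] at hw2; subst hw2
    rw [rcomp_concat, rcomp_concat] at heq
    have hk1 : 1 ≤ k₁ ∧ k₁ ≤ d := h1 k₁ (by simp)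
    have hk2 : 1 ≤ k₂ ∧ k₂ ≤ d := h2 k₂ (by simp)
    have hu1 : ∀ j ∈ u₁, 1 ≤ j ∧ j ≤ d := fun j hj => h1 j (by simp [hj])
    have hu2 : ∀ j ∈ u₂, 1 ≤ j ∧ j ≤ d := fun j hj => h2 j (by simp [hj])
    have hT := sgT_pos (d := d) hb
    rcases rinv hb u₁ hu1 with ⟨he1, hv1⟩ | ⟨he1, hv1⟩ <;>
      rcases rinv hb u₂ hu2 with ⟨he2, hv2⟩ | ⟨he2, hv2⟩
    · -- both empty
      rw [hv1, hv2, rg_zero, rg_zero] at heq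
      have hbk : b^k₁ = b^k₂ := by
        exact mul_left_cancel₀ hT.ne' heq
      have hkk : k₁ = k₂ := by
        by_contra hkk
        rcases Nat.lt_or_ge k₁ k₂ with h | h
        · exact absurd hbk (ne_of_lt (pow_lt_pow_right₀ hb h))
        · have h' : k₂ < k₁ := by omega
          exact absurd hbk.symm (ne_of_lt (pow_lt_pow_right₀ hb h'))
      exact hne (by rw [he1, he2, hkk])
    · -- u₁ empty, u₂ not
      rw [hv1, rg_zero] at heq
      have hb1 : b ≤ b^k₁ := by
        calc b = b^1 := (pow_one b).symm
          _ ≤ b^k₁ := pow_le_pow_right₀ hb.le hk1.1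
      have hlt := rg_lt_sgT hb hk2.1 hk2.2 hv2
      nlinarith
    · -- u₂ empty, u₁ not
      rw [hv2, rg_zero] at heq
      have hb2 : b ≤ b^k₂ := by
        calc b = b^1 := (pow_one b).symm
          _ ≤ b^k₂ := pow_le_pow_right₀ hb.le hk2.1
      have hlt := rg_lt_sgT hb hk1.1 hk1.2 hv1
      nlinarith
    · -- both nonempty
      have hkk : k₁ = k₂ := by
        by_contra hkk
        rcases Nat.lt_or_ge k₁ k₂ with h | h
        · have := rg_disjoint hb hk1.1 h hk2.2 hv1 hv2
          linarith
        · have h' : k₂ < k₁ := by omega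
          have := rg_disjoint hb hk2.1 h' hk1.2 hv2 hv1
          linarith
      subst hkk
      have hyy : rcomp b d u₁ 0 = rcomp b d u₂ 0 :=
        rg_inj hb hk1.1 (by linarith) (by linarith) heq
      have hune : u₁ ≠ u₂ := fun h => hne (by rw [h])
      have hlen' : u₁.length + u₂.length ≤ n := by
        simp only [List.length_append, List.length_singleton] at hlen
        omega
      exact ih u₁ u₂ hlen' hu1 hu2 hune hyy

end Real

/- ### polynomial representation -/

open Polynomial in
noncomputable def pstep (b : ℝ) (k : ℕ) (p : Polynomial ℂ × Polynomial ℂ) :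
    Polynomial ℂ × Polynomial ℂ :=
  (X * (p.1 + C (b:ℂ) * p.2)^k, (C (b:ℂ) * p.1 + p.2)^k)

noncomputable def pfold (b : ℝ) (l : List ℕ) (p : Polynomial ℂ × Polynomial ℂ) :
    Polynomial ℂ × Polynomial ℂ :=
  l.foldl (fun q k => pstep b k q) p

section Cx
variable {b : ℝ} {d : ℕ} (hb : 1 < b)

lemma sgComp_nil (lam z : ℂ) : sgComp b lam [] z = z := rfl

lemma sgComp_cons (lam z : ℂ) (k : ℕ) (l : List ℕ) :
    sgComp b lam (k :: l) z = sgComp b lam l (fl b lam k z) := rfl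

lemma pfold_nil (p : Polynomial ℂ × Polynomial ℂ) : pfold b [] p = p := rfl

lemma pfold_cons (k : ℕ) (l : List ℕ) (p : Polynomial ℂ × Polynomial ℂ) :
    pfold b (k :: l) p = pfold b l (pstep b k p) := rfl

include hb

omit hb in
lemma fl_ofReal (k : ℕ) (x : ℝ) :
    fl b ((sgT b d : ℝ) : ℂ) k ((x : ℝ) : ℂ) = ((rg b d k x : ℝ) : ℂ) := by
  rw [fl, rg]
  push_cast
  ring

omit hb in
lemma sgComp_ofReal : ∀ (l : List ℕ) (x : ℝ),
    sgComp b ((sgT b d : ℝ) : ℂ) l ((x : ℝ) : ℂ) = ((rcomp b d l x : ℝ) : ℂ) := by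
  intro l
  induction l with
  | nil => intro x; rfl
  | cons k l ih =>
    intro x
    rw [sgComp_cons, rcomp_cons, fl_ofReal, ih]

lemma sgDefined_ofReal : ∀ (l : List ℕ) (x : ℝ), 0 ≤ x →
    sgDefined b ((sgT b d : ℝ) : ℂ) l ((x : ℝ) : ℂ) := by
  intro l
  induction l with
  | nil => intro x _; trivial
  | cons k l ih =>
    intro x hx
    refine ⟨?_, ?_⟩
    · have h : ((b*x+1 : ℝ) : ℂ) ≠ 0 := by
        rw [Complex.ofReal_ne_zero]
        exact (den_pos hb hx).ne'
      simpa [Complex.ofReal_mul, Complex.ofReal_add, Complex.ofReal_one] using h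
    · rw [fl_ofReal]
      exact ih _ (rg_pos hb hx k).le

omit hb in
open Polynomial in
lemma comp_eq_poly : ∀ (l : List ℕ) (p : Polynomial ℂ × Polynomial ℂ) (lam z : ℂ),
    p.2.eval lam ≠ 0 → z = p.1.eval lam / p.2.eval lam → sgDefined b lam l z →
    (pfold b l p).2.eval lam ≠ 0 ∧
      sgComp b lam l z = (pfold b l p).1.eval lam / (pfold b l p).2.eval lam := by
  intro l
  induction l with
  | nil => intro p lam z hD hz _; exact ⟨hD, hz⟩
  | cons k l ih =>
    intro p lam z hD hz hdef
    obtain ⟨hden, hdef'⟩ := hdef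
    have hBND : (C (b:ℂ) * p.1 + p.2).eval lam ≠ 0 := by
      have : (C (b:ℂ) * p.1 + p.2).eval lam = p.2.eval lam * ((b:ℂ)*z + 1) := by
        rw [hz]; simp only [eval_add, eval_mul, eval_C]
        field_simp
      rw [this]
      exact mul_ne_zero hD hden
    have hD' : (pstep b k p).2.eval lam ≠ 0 := by
      simp only [pstep, eval_pow]
      exact pow_ne_zero _ hBND
    have hBND2 : (b:ℂ) * p.1.eval lam + p.2.eval lam ≠ 0 := by
      simpa only [Polynomial.eval_add, Polynomial.eval_mul, Polynomial.eval_C] using hBND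
    have hz' : fl b lam k z = (pstep b k p).1.eval lam / (pstep b k p).2.eval lam := by
      rw [hz] at hden
      simp only [pstep, fl, eval_mul, eval_pow, eval_add, eval_X, eval_C]
      rw [hz, mul_div_assoc, ← div_pow]
      congr 2
      rw [div_eq_div_iff hden hBND2]
      field_simp
    rw [sgComp_cons, pfold_cons]
    exact ih (pstep b k p) lam (fl b lam k z) hD' hz' hdef'

omit hb in
open Polynomial in
lemma undef_poly : ∀ (l : List ℕ) (p : Polynomial ℂ × Polynomial ℂ) (lam z : ℂ),
    p.2.eval lam ≠ 0 → z = p.1.eval lam / p.2.eval lam → ¬ sgDefined b lam l z →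
    ∃ q : List ℕ, (C (b:ℂ) * (pfold b q p).1 + (pfold b q p).2).eval lam = 0 := by
  intro l
  induction l with
  | nil => intro p lam z _ _ h; exact absurd trivial h
  | cons k l ih =>
    intro p lam z hD hz hundef
    by_cases hden : (b:ℂ)*z + 1 = 0
    · refine ⟨[], ?_⟩
      rw [pfold_nil]
      have : (C (b:ℂ) * p.1 + p.2).eval lam = p.2.eval lam * ((b:ℂ)*z + 1) := by
        rw [hz]; simp only [eval_add, eval_mul, eval_C]
        field_simp
      rw [this, hden, mul_zero]
    · have hBND : (C (b:ℂ) * p.1 + p.2).eval lam ≠ 0 := by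
        have : (C (b:ℂ) * p.1 + p.2).eval lam = p.2.eval lam * ((b:ℂ)*z + 1) := by
          rw [hz]; simp only [eval_add, eval_mul, eval_C]
          field_simp
        rw [this]
        exact mul_ne_zero hD hden
      have hBND2 : (b:ℂ) * p.1.eval lam + p.2.eval lam ≠ 0 := by
        simpa only [Polynomial.eval_add, Polynomial.eval_mul, Polynomial.eval_C] using hBND
      have hD' : (pstep b k p).2.eval lam ≠ 0 := by
        simp only [pstep, eval_pow]
        exact pow_ne_zero _ hBND
      have hz' : fl b lam k z = (pstep b k p).1.eval lam / (pstep b k p).2.eval lam := by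
        rw [hz] at hden
        simp only [pstep, fl, eval_mul, eval_pow, eval_add, eval_X, eval_C]
        rw [hz, mul_div_assoc, ← div_pow]
        congr 2
        rw [div_eq_div_iff hden hBND2]
        field_simp
      have hundef' : ¬ sgDefined b lam l (fl b lam k z) := fun h => hundef ⟨hden, h⟩
      obtain ⟨q, hq⟩ := ih (pstep b k p) lam (fl b lam k z) hD' hz' hundef'
      exact ⟨k :: q, by rw [pfold_cons]; exact hq⟩

open Polynomial in
lemma Cq_facts (q : List ℕ) :
    (pfold b q ((0:Polynomial ℂ), 1)).2.eval ((sgT b d : ℝ) : ℂ) ≠ 0 ∧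
    (C (b:ℂ) * (pfold b q ((0:Polynomial ℂ), 1)).1 +
      (pfold b q ((0:Polynomial ℂ), 1)).2) ≠ 0 := by
  have hdef : sgDefined b ((sgT b d : ℝ) : ℂ) q ((0:ℝ) : ℂ) := sgDefined_ofReal hb q 0 le_rfl
  have h0 : ((0:ℝ) : ℂ) = (0:ℂ) := Complex.ofReal_zero
  rw [h0] at hdef
  obtain ⟨hD, hcomp⟩ := comp_eq_poly q ((0:Polynomial ℂ), 1) ((sgT b d : ℝ) : ℂ) 0
    (by simp) (by simp) hdef
  refine ⟨hD, ?_⟩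
  intro hzero
  have heval : (C (b:ℂ) * (pfold b q ((0:Polynomial ℂ), 1)).1 +
      (pfold b q ((0:Polynomial ℂ), 1)).2).eval ((sgT b d : ℝ) : ℂ) = 0 := by
    rw [hzero]; simp
  have hval : sgComp b ((sgT b d : ℝ) : ℂ) q 0 = ((rcomp b d q 0 : ℝ) : ℂ) := by
    rw [← h0, sgComp_ofReal]
  have hy : (0:ℝ) ≤ rcomp b d q 0 := rcomp_nonneg hb q 0 le_rfl
  have hNv : (pfold b q ((0:Polynomial ℂ), 1)).1.eval ((sgT b d : ℝ) : ℂ)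
      = ((rcomp b d q 0 : ℝ) : ℂ) * (pfold b q ((0:Polynomial ℂ), 1)).2.eval ((sgT b d : ℝ) : ℂ) := by
    rw [← hval, hcomp, div_mul_cancel₀ _ hD]
  rw [eval_add, eval_mul, eval_C, hNv] at heval
  have : ((b * rcomp b d q 0 + 1 : ℝ) : ℂ) *
      (pfold b q ((0:Polynomial ℂ), 1)).2.eval ((sgT b d : ℝ) : ℂ) = 0 := by
    push_cast
    linear_combination heval
  rcases mul_eq_zero.1 this with h | h
  · exact absurd h (Complex.ofReal_ne_zero.2 (den_pos hb hy).ne')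
  · exact hD h

open Polynomial in
lemma E_ne_zero {w₁ w₂ : List ℕ} (h1 : ∀ k ∈ w₁, 1 ≤ k ∧ k ≤ d)
    (h2 : ∀ k ∈ w₂, 1 ≤ k ∧ k ≤ d) (hne : w₁ ≠ w₂) :
    (pfold b w₁ ((0:Polynomial ℂ), 1)).1 * (pfold b w₂ ((0:Polynomial ℂ), 1)).2 -
      (pfold b w₂ ((0:Polynomial ℂ), 1)).1 * (pfold b w₁ ((0:Polynomial ℂ), 1)).2 ≠ 0 := by
  intro hzero
  set lam0 : ℂ := ((sgT b d : ℝ) : ℂ) with hlam0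
  have hdef1 : sgDefined b lam0 w₁ ((0:ℝ) : ℂ) := sgDefined_ofReal hb w₁ 0 le_rfl
  have hdef2 : sgDefined b lam0 w₂ ((0:ℝ) : ℂ) := sgDefined_ofReal hb w₂ 0 le_rfl
  rw [Complex.ofReal_zero] at hdef1 hdef2
  obtain ⟨hD1, hc1⟩ := comp_eq_poly w₁ ((0:Polynomial ℂ), 1) lam0 0 (by simp) (by simp) hdef1
  obtain ⟨hD2, hc2⟩ := comp_eq_poly w₂ ((0:Polynomial ℂ), 1) lam0 0 (by simp) (by simp) hdef2
  have hv1 : sgComp b lam0 w₁ 0 = ((rcomp b d w₁ 0 : ℝ) : ℂ) := by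
    rw [hlam0, ← Complex.ofReal_zero, sgComp_ofReal]
  have hv2 : sgComp b lam0 w₂ 0 = ((rcomp b d w₂ 0 : ℝ) : ℂ) := by
    rw [hlam0, ← Complex.ofReal_zero, sgComp_ofReal]
  have hrne : rcomp b d w₁ 0 ≠ rcomp b d w₂ 0 :=
    rdistinct hb (w₁.length + w₂.length) w₁ w₂ le_rfl h1 h2 hne
  have hcne : sgComp b lam0 w₁ 0 ≠ sgComp b lam0 w₂ 0 := by
    rw [hv1, hv2]
    exact fun h => hrne (Complex.ofReal_injective h)
  apply hcne
  rw [hc1, hc2, div_eq_div_iff hD1 hD2]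
  have := congrArg (Polynomial.eval lam0) hzero
  simp only [eval_sub, eval_mul, eval_zero] at this
  linear_combination this

end Cx

/-- Let `d ≥ 2` and `b > 1`.  The set of parameters `λ ∈ ℂ` for which two distinct
nonempty words over `{1,…,d}` give the same composed rational map (wherever both are
defined) is countable; hence for all but countably many `λ` the semigroup generated by
`f_{λ,1},…,f_{λ,d}` is free. -/
theorem stmt7 (d : ℕ) (hd : 2 ≤ d) (b : ℝ) (hb : 1 < b) :
    Set.Countable {lam : ℂ | ∃ w₁ w₂ : List ℕ, w₁ ≠ [] ∧ w₂ ≠ [] ∧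
      (∀ k ∈ w₁, 1 ≤ k ∧ k ≤ d) ∧ (∀ k ∈ w₂, 1 ≤ k ∧ k ≤ d) ∧ w₁ ≠ w₂ ∧
      ∀ z : ℂ, sgDefined b lam w₁ z → sgDefined b lam w₂ z →
        sgComp b lam w₁ z = sgComp b lam w₂ z} := by
  classical
  set F : List ℕ × List ℕ → Set ℂ := fun w =>
    {lam : ℂ | (∀ k ∈ w.1, 1 ≤ k ∧ k ≤ d) ∧ (∀ k ∈ w.2, 1 ≤ k ∧ k ≤ d) ∧ w.1 ≠ w.2 ∧
      ∀ z : ℂ, sgDefined b lam w.1 z → sgDefined b lam w.2 z →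
        sgComp b lam w.1 z = sgComp b lam w.2 z} with hF
  have hsub : {lam : ℂ | ∃ w₁ w₂ : List ℕ, w₁ ≠ [] ∧ w₂ ≠ [] ∧
      (∀ k ∈ w₁, 1 ≤ k ∧ k ≤ d) ∧ (∀ k ∈ w₂, 1 ≤ k ∧ k ≤ d) ∧ w₁ ≠ w₂ ∧
      ∀ z : ℂ, sgDefined b lam w₁ z → sgDefined b lam w₂ z →
        sgComp b lam w₁ z = sgComp b lam w₂ z} ⊆ ⋃ w : List ℕ × List ℕ, F w := by
    rintro lam ⟨w₁, w₂, -, -, h3, h4, h5, h6⟩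
    exact Set.mem_iUnion.2 ⟨(w₁, w₂), h3, h4, h5, h6⟩
  refine Set.Countable.mono hsub (Set.countable_iUnion ?_)
  rintro ⟨w₁, w₂⟩
  by_cases hc : (∀ k ∈ w₁, 1 ≤ k ∧ k ≤ d) ∧ (∀ k ∈ w₂, 1 ≤ k ∧ k ≤ d) ∧ w₁ ≠ w₂
  · obtain ⟨h1, h2, hne⟩ := hc
    set p₀ : Polynomial ℂ × Polynomial ℂ := ((0:Polynomial ℂ), 1) with hp₀
    set E : Polynomial ℂ := (pfold b w₁ p₀).1 * (pfold b w₂ p₀).2 -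
      (pfold b w₂ p₀).1 * (pfold b w₁ p₀).2 with hE
    have hEne : E ≠ 0 := E_ne_zero hb h1 h2 hne
    have hsub2 : F (w₁, w₂) ⊆ {lam : ℂ | E.IsRoot lam} ∪
        ⋃ q : List ℕ, {lam : ℂ | (Polynomial.C (b:ℂ) * (pfold b q p₀).1 +
          (pfold b q p₀).2).IsRoot lam} := by
      rintro lam ⟨-, -, -, hall⟩
      by_cases hd1 : sgDefined b lam w₁ 0
      · by_cases hd2 : sgDefined b lam w₂ 0
        · left
          obtain ⟨hD1, hc1⟩ := comp_eq_poly w₁ p₀ lam 0 (by simp [hp₀]) (by simp [hp₀]) hd1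
          obtain ⟨hD2, hc2⟩ := comp_eq_poly w₂ p₀ lam 0 (by simp [hp₀]) (by simp [hp₀]) hd2
          have heq := hall 0 hd1 hd2
          rw [hc1, hc2, div_eq_div_iff hD1 hD2] at heq
          show E.eval lam = 0
          rw [hE]
          simp only [Polynomial.eval_sub, Polynomial.eval_mul]
          linear_combination heq
        · right
          obtain ⟨q, hq⟩ := undef_poly w₂ p₀ lam 0 (by simp [hp₀]) (by simp [hp₀]) hd2
          exact Set.mem_iUnion.2 ⟨q, hq⟩
      · right
        obtain ⟨q, hq⟩ := undef_poly w₁ p₀ lam 0 (by simp [hp₀]) (by simp [hp₀]) hd1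
        exact Set.mem_iUnion.2 ⟨q, hq⟩
    refine Set.Countable.mono hsub2 (Set.Countable.union ?_ ?_)
    · exact (Polynomial.finite_setOf_isRoot hEne).countable
    · exact Set.countable_iUnion fun q =>
        (Polynomial.finite_setOf_isRoot (Cq_facts (d := d) hb q).2).countable
  · refine Set.Countable.mono ?_ Set.countable_empty
    rintro lam ⟨h1, h2, h3, -⟩
    exact absurd ⟨h1, h2, h3⟩ hc
end

section
/- Let d ≥ 2 be an integer, m ∈ {1, …, d−1}, t ∈ (0,1) and s ∈ (0,t) real numbers. Then there exists k ∈ {1, …, d−1} such that the number A_k = ((2m − s)/d)·k + t, when reduced modulo 2 to a representative in [0,2), lies in the open interval (1,2). -/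
/-- Let `d ≥ 2`, `m ∈ {1,…,d−1}`, `t ∈ (0,1)` and `s ∈ (0,t)`.  Then there is
`k ∈ {1,…,d−1}` such that `A_k = ((2m−s)/d)·k + t`, reduced modulo 2 to its
representative in `[0,2)`, lies in the open interval `(1,2)`. -/
theorem stmt8 (d : ℕ) (hd : 2 ≤ d) (m : ℕ) (hm1 : 1 ≤ m) (hm2 : m ≤ d - 1)
    (t s : ℝ) (ht0 : 0 < t) (ht1 : t < 1) (hs0 : 0 < s) (hst : s < t) :
    ∃ k : ℕ, 1 ≤ k ∧ k ≤ d - 1 ∧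
      (1 : ℝ) < ((2 * (m : ℝ) - s) / (d : ℝ)) * (k : ℝ) + t -
        2 * (⌊(((2 * (m : ℝ) - s) / (d : ℝ)) * (k : ℝ) + t) / 2⌋ : ℝ) ∧
      ((2 * (m : ℝ) - s) / (d : ℝ)) * (k : ℝ) + t -
        2 * (⌊(((2 * (m : ℝ) - s) / (d : ℝ)) * (k : ℝ) + t) / 2⌋ : ℝ) < 2 := by
  have hdR : (2:ℝ) ≤ (d:ℝ) := by exact_mod_cast hd
  have hd0 : (0:ℝ) < d := by linarith
  set α : ℝ := (2 * (m : ℝ) - s) / (d : ℝ) with hαdef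
  have hmR1 : (1:ℝ) ≤ (m:ℝ) := by exact_mod_cast hm1
  have hmdR : (m:ℝ) ≤ (d:ℝ) - 1 := by
    have h : ((m:ℕ):ℝ) ≤ ((d-1:ℕ):ℝ) := by exact_mod_cast hm2
    rwa [Nat.cast_sub (by omega), Nat.cast_one] at h
  have hα0 : 0 < α := by
    apply div_pos <;> linarith
  have hα2 : α < 2 := by
    rw [hαdef, div_lt_iff₀ hd0]; linarith
  have hαd : α * d = 2*(m:ℝ) - s := by
    rw [hαdef]; field_simp
  have hexp : α * ((d:ℝ)-1) = 2*(m:ℝ) - s - α := by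
    rw [mul_sub, mul_one, hαd]
  have hdm1 : ((d-1:ℕ):ℝ) = (d:ℝ) - 1 := by
    rw [Nat.cast_sub (by omega), Nat.cast_one]
  by_contra hcon
  push_neg at hcon
  have hub : ∀ k : ℕ, α * k + t - 2 * (⌊(α * k + t)/2⌋:ℝ) < 2 := by
    intro k
    have h2 : (α * k + t)/2 < ⌊(α * k + t)/2⌋ + 1 := Int.lt_floor_add_one _
    linarith
  have hlb : ∀ k : ℕ, 0 ≤ α * k + t - 2 * (⌊(α * k + t)/2⌋:ℝ) := by
    intro k
    have h1 : (⌊(α * k + t)/2⌋:ℝ) ≤ (α * k + t)/2 := Int.floor_le _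
    linarith
  have hle : ∀ k : ℕ, 1 ≤ k → k ≤ d - 1 →
      α * k + t - 2 * (⌊(α * k + t)/2⌋:ℝ) ≤ 1 := by
    intro k h1 h2
    by_contra h
    push_neg at h
    exact absurd (hcon k h1 h2 h) (by linarith [hub k])
  rcases lt_trichotomy α 1 with hlt | heq | hgt
  · -- α < 1 : all values stay in (0,1], contradiction at k = d
    have key : ∀ k : ℕ, k ≤ d - 1 → α * k + t ≤ 1 := by
      intro k hk
      induction k with
      | zero => simpa using le_of_lt ht1
      | succ n ih =>
        have hn : n ≤ d - 1 := by omega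
        have ihn := ih hn
        have hA : α * ((n:ℝ)+1) + t < 2 := by nlinarith
        have hA0 : (0:ℝ) < α * ((n:ℝ)+1) + t := by positivity
        have hcast : ((n+1:ℕ):ℝ) = (n:ℝ) + 1 := by push_cast; ring
        have hfl : ⌊(α * ((n+1:ℕ):ℝ) + t)/2⌋ = 0 := by
          rw [Int.floor_eq_zero_iff, Set.mem_Ico, hcast]
          constructor
          · positivity
          · linarith
        have := hle (n+1) (by omega) hk
        rw [hfl, hcast] at this
        simpa using this
    have hlast := key (d-1) le_rfl
    rw [hdm1, hexp] at hlast
    linarith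
  · -- α = 1 : k = 1 already works, contradicting hcon
    have h1 : α * (1:ℕ) + t = 1 + t := by rw [heq]; push_cast; ring
    have hfl : ⌊(α * ((1:ℕ):ℝ) + t)/2⌋ = 0 := by
      rw [Int.floor_eq_zero_iff, Set.mem_Ico, h1]
      constructor
      · linarith
      · linarith
    have h2 := hcon 1 le_rfl (by omega) (by rw [hfl, h1]; push_cast; linarith)
    rw [hfl, h1] at h2
    push_cast at h2
    linarith
  · -- α > 1 : floor climbs by one each step, contradiction at k = d
    have key : ∀ k : ℕ, 1 ≤ k → k ≤ d - 1 →
        2 * (k:ℝ) ≤ α * k + t ∧ α * k + t ≤ 2 * k + 1 := by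
      intro k hk1
      induction k, hk1 using Nat.le_induction with
      | base =>
        intro hk2
        have hA1 : (1:ℝ) < α * ((1:ℕ):ℝ) + t := by push_cast; nlinarith
        have hA3 : α * ((1:ℕ):ℝ) + t < 3 := by push_cast; nlinarith
        have h1 := hle 1 le_rfl hk2
        have h0 := hlb 1
        set F : ℤ := ⌊(α * ((1:ℕ):ℝ) + t)/2⌋ with hF
        have hFge : (1:ℤ) ≤ F := by
          have : (0:ℝ) < (F:ℝ) := by linarith
          have : (0:ℤ) < F := by exact_mod_cast this
          omega
        have hFle : F ≤ 1 := by
          have : (F:ℝ) < 2 := by linarith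
          have : F < 2 := by exact_mod_cast this
          omega
        have hF1 : F = 1 := le_antisymm hFle hFge
        rw [hF1] at h1 h0
        push_cast at h1 h0 ⊢
        constructor <;> linarith
      | succ n hn ih =>
        intro hk2
        have ihn := ih (by omega)
        have hAlo : 2 * (n:ℝ) + 1 < α * ((n+1:ℕ):ℝ) + t := by
          push_cast; nlinarith [ihn.1]
        have hAhi : α * ((n+1:ℕ):ℝ) + t < 2 * (n:ℝ) + 3 := by
          push_cast; nlinarith [ihn.2]
        have h1 := hle (n+1) (by omega) hk2
        have h0 := hlb (n+1)
        set F : ℤ := ⌊(α * ((n+1:ℕ):ℝ) + t)/2⌋ with hF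
        have hFge : (n:ℤ) + 1 ≤ F := by
          have : ((n:ℤ):ℝ) < (F:ℝ) := by push_cast; linarith
          have : (n:ℤ) < F := by exact_mod_cast this
          omega
        have hFle : F ≤ (n:ℤ) + 1 := by
          have : (F:ℝ) < ((n:ℤ):ℝ) + 2 := by push_cast; linarith
          have : F < (n:ℤ) + 2 := by exact_mod_cast this
          omega
        have hF1 : F = (n:ℤ) + 1 := le_antisymm hFle hFge
        rw [hF1] at h1 h0
        push_cast at h1 h0 ⊢
        constructor <;> linarith
    have hlast := (key (d-1) (by omega) le_rfl).1
    rw [hdm1, hexp] at hlast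
    linarith
end

section
/- Let d ≥ 2 be an integer and λ ∈ S¹. If b > (d+1)/(d−1), then f_λ is uniformly expanding on the unit circle: for every z ∈ S¹, |f'_λ(z)| ≥ d(b−1)/(b+1) > 1. If b = (d+1)/(d−1), then f_λ is expanding on the unit circle: |f'_λ(z)| > 1 for every z ∈ S¹ with z ≠ 1, and |f'_λ(1)| = 1. -/
open Complex

lemma fIsing_hasDerivAt (d : ℕ) (b : ℝ) (lam z : ℂ) (hz : (b : ℂ) * z + 1 ≠ 0) :
    HasDerivAt (fIsing d b lam)
      (lam * ((d : ℂ) * ((z + (b : ℂ)) / ((b : ℂ) * z + 1)) ^ (d - 1) *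
        ((1 - (b : ℂ) ^ 2) / ((b : ℂ) * z + 1) ^ 2))) z := by
  have h1 : HasDerivAt (fun z : ℂ => z + (b : ℂ)) 1 z := (hasDerivAt_id z).add_const _
  have h2 : HasDerivAt (fun z : ℂ => (b : ℂ) * z + 1) (b : ℂ) z := by
    simpa using ((hasDerivAt_id z).const_mul (b : ℂ)).add_const (1 : ℂ)
  have h3 := h1.div h2 hz
  have h4 := (h3.pow d).const_mul lam
  exact h4.congr_deriv (by simp only [Pi.div_apply]; ring)

lemma abs_deriv_fIsing (d : ℕ) (b : ℝ) (lam z : ℂ) (hlam : ‖lam‖ = 1)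
    (hz : ‖z‖ = 1) (hb : 1 < b) :
    ‖deriv (fIsing d b lam) z‖ =
      (d : ℝ) * (b ^ 2 - 1) / (b ^ 2 + 1 + 2 * b * z.re) := by
  have h1 : z.re * z.re + z.im * z.im = 1 := by
    have : Complex.normSq z = 1 := by rw [← Complex.sq_norm, hz]; norm_num
    simpa [Complex.normSq_apply] using this
  have hre : |z.re| ≤ 1 := by
    have := Complex.abs_re_le_norm z; rwa [hz] at this
  have hre1 : -1 ≤ z.re := neg_le_of_abs_le hre
  have hD : Complex.normSq ((b : ℂ) * z + 1) = b ^ 2 + 1 + 2 * b * z.re := by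
    simp [Complex.normSq_apply, Complex.add_re, Complex.add_im, Complex.mul_re,
      Complex.mul_im]
    nlinarith [h1]
  have hDpos : 0 < b ^ 2 + 1 + 2 * b * z.re := by nlinarith
  have hw : (b : ℂ) * z + 1 ≠ 0 := by
    intro h
    rw [h] at hD
    simp at hD
    nlinarith
  have habs_eq : ‖z + (b : ℂ)‖ = ‖(b : ℂ) * z + 1‖ := by
    rw [Complex.norm_def, Complex.norm_def]
    congr 1
    rw [hD]
    simp [Complex.normSq_apply, Complex.add_re, Complex.add_im, Complex.mul_re,
      Complex.mul_im]
    nlinarith [h1]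
  have hu : ‖(z + (b : ℂ)) / ((b : ℂ) * z + 1)‖ = 1 := by
    rw [norm_div, habs_eq, div_self (norm_ne_zero_iff.mpr hw)]
  rw [(fIsing_hasDerivAt d b lam z hw).deriv]
  have hcast : (1 - (b : ℂ) ^ 2) = ((1 - b ^ 2 : ℝ) : ℂ) := by push_cast; ring
  simp only [norm_mul, norm_div, norm_pow, hlam, hu, hcast, Complex.norm_real, Real.norm_eq_abs,
    Complex.norm_natCast, Complex.sq_norm, hD, one_pow, one_mul]
  rw [abs_of_nonpos (by nlinarith : (1 : ℝ) - b ^ 2 ≤ 0)]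
  ring

/-- Let `d ≥ 2` and `λ ∈ S¹`.  If `b > (d+1)/(d−1)` then `f_λ` is uniformly expanding
on the unit circle: `|f'_λ(z)| ≥ d(b−1)/(b+1) > 1` for all `z ∈ S¹`.  If
`b = (d+1)/(d−1)` then `f_λ` is expanding: `|f'_λ(z)| > 1` for `z ∈ S¹ \ {1}`, while
`|f'_λ(1)| = 1`. -/
theorem stmt11 (d : ℕ) (hd : 2 ≤ d) (b : ℝ)
    (lam : ℂ) (hlam : lam ∈ Metric.sphere (0 : ℂ) 1) :
    (((d : ℝ) + 1) / ((d : ℝ) - 1) < b →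
      (1 : ℝ) < (d : ℝ) * (b - 1) / (b + 1) ∧
      ∀ z ∈ Metric.sphere (0 : ℂ) 1,
        (d : ℝ) * (b - 1) / (b + 1) ≤ ‖deriv (fIsing d b lam) z‖) ∧
    (b = ((d : ℝ) + 1) / ((d : ℝ) - 1) →
      (∀ z ∈ Metric.sphere (0 : ℂ) 1, z ≠ 1 →
        1 < ‖deriv (fIsing d b lam) z‖) ∧
      ‖deriv (fIsing d b lam) 1‖ = 1) := by
  have hlam' : ‖lam‖ = 1 := by simpa using hlam
  have hd1 : (1 : ℝ) ≤ (d : ℝ) - 1 := by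
    have : (2 : ℝ) ≤ (d : ℝ) := by exact_mod_cast hd
    linarith
  have hcrit : (1 : ℝ) < ((d : ℝ) + 1) / ((d : ℝ) - 1) := by
    rw [lt_div_iff₀ (by linarith)]; linarith
  constructor
  · intro hb
    have hb1 : 1 < b := lt_trans hcrit hb
    have hnum : b + 1 < (d : ℝ) * (b - 1) := by
      rw [div_lt_iff₀ (by linarith)] at hb
      nlinarith
    constructor
    · rw [lt_div_iff₀ (by linarith)]; linarith
    · intro z hz
      have hz1 : ‖z‖ = 1 := by simpa using hz
      have hre : |z.re| ≤ 1 := by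
        have := Complex.abs_re_le_norm z; rwa [hz1] at this
      have hre2 : z.re ≤ 1 := le_of_abs_le hre
      have hre1 : -1 ≤ z.re := neg_le_of_abs_le hre
      rw [abs_deriv_fIsing d b lam z hlam' hz1 hb1]
      have hDpos : 0 < b ^ 2 + 1 + 2 * b * z.re := by nlinarith
      have key : (d : ℝ) * (b - 1) / (b + 1) = (d : ℝ) * (b ^ 2 - 1) / (b + 1) ^ 2 := by
        rw [div_eq_div_iff (by linarith) (by positivity)]; ring
      rw [key]
      apply div_le_div_of_nonneg_left _ hDpos _
      · nlinarith
      · nlinarith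
  · intro hb
    have hb1 : 1 < b := hb ▸ hcrit
    have hbd : b * ((d : ℝ) - 1) = (d : ℝ) + 1 := by
      rw [hb, div_mul_cancel₀]; linarith
    constructor
    · intro z hz hz1
      have hza : ‖z‖ = 1 := by simpa using hz
      have hre : |z.re| ≤ 1 := by
        have := Complex.abs_re_le_norm z; rwa [hza] at this
      have hre1 : -1 ≤ z.re := neg_le_of_abs_le hre
      have hre2 : z.re < 1 := by
        rcases lt_or_eq_of_le (le_of_abs_le hre) with h | h
        · exact h
        · exfalso
          apply hz1
          have hn : Complex.normSq z = 1 := by rw [← Complex.sq_norm, hza]; norm_num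
          have him : z.im = 0 := by
            rw [Complex.normSq_apply, h] at hn
            nlinarith [sq_nonneg z.im]
          exact Complex.ext (by simp [h]) (by simp [him])
      rw [abs_deriv_fIsing d b lam z hlam' hza hb1]
      have hDpos : 0 < b ^ 2 + 1 + 2 * b * z.re := by nlinarith
      have hDlt : b ^ 2 + 1 + 2 * b * z.re < (b + 1) ^ 2 := by nlinarith
      have h2 : (d : ℝ) * (b ^ 2 - 1) = (b + 1) ^ 2 := by nlinarith
      rw [lt_div_iff₀ hDpos, one_mul, h2]
      exact hDlt
    · rw [abs_deriv_fIsing d b lam 1 hlam' (by simp) hb1]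
      have h2 : (d : ℝ) * (b ^ 2 - 1) = (b + 1) ^ 2 := by nlinarith
      simp only [Complex.one_re]
      rw [h2, div_eq_one_iff_eq (by positivity)]
      ring
end

section
/- Let d ≥ 2 be an integer, b > 1 a real number, and λ ∈ S¹. Then 1 is a fixed point of f_λ (i.e. f_λ(1) = 1) if and only if λ = 1; moreover |f'_λ(1)| = d(b−1)/(b+1), so 1 is an attracting fixed point of f_λ (f_λ(1) = 1 and |f'_λ(1)| < 1) if and only if λ = 1 and b < (d+1)/(d−1). -/
open Complex

/-- Let `d ≥ 2`, `b > 1` and `λ ∈ S¹`.  Then `1` is a fixed point of `f_λ` iff `λ = 1`;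
moreover `|f'_λ(1)| = d(b−1)/(b+1)`, so `1` is an attracting fixed point of `f_λ` iff
`λ = 1` and `b < (d+1)/(d−1)`. -/
theorem stmt12 (d : ℕ) (hd : 2 ≤ d) (b : ℝ) (hb : 1 < b)
    (lam : ℂ) (hlam : lam ∈ Metric.sphere (0 : ℂ) 1) :
    (fIsing d b lam 1 = 1 ↔ lam = 1) ∧
    ‖deriv (fIsing d b lam) 1‖ = (d : ℝ) * (b - 1) / (b + 1) ∧
    ((fIsing d b lam 1 = 1 ∧ ‖deriv (fIsing d b lam) 1‖ < 1) ↔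
      (lam = 1 ∧ b < ((d : ℝ) + 1) / ((d : ℝ) - 1))) := by
  have hlam1 : ‖lam‖ = 1 := by simpa using hlam
  have hbne : (b : ℂ) + 1 ≠ 0 := by
    intro h
    have := congrArg Complex.re h
    simp at this
    linarith
  have hden : (b : ℂ) * 1 + 1 ≠ 0 := by simpa using hbne
  have hfix : fIsing d b lam 1 = lam := by
    rw [fIsing]
    rw [show (1 : ℂ) + (b : ℂ) = (b : ℂ) * 1 + 1 by ring]
    rw [div_self hden, one_pow, mul_one]
  have hg : HasDerivAt (fun z : ℂ => (z + (b : ℂ)) / ((b : ℂ) * z + 1))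
      ((1 * ((b : ℂ) * 1 + 1) - ((1 : ℂ) + b) * b) / ((b : ℂ) * 1 + 1) ^ 2) 1 := by
    have h1 : HasDerivAt (fun z : ℂ => z + (b : ℂ)) 1 1 := (hasDerivAt_id 1).add_const _
    have h2 : HasDerivAt (fun z : ℂ => (b : ℂ) * z + 1) (b : ℂ) 1 := by
      simpa using ((hasDerivAt_id (1 : ℂ)).const_mul (b : ℂ)).add_const 1
    exact h1.div h2 hden
  have hF : HasDerivAt (fIsing d b lam)
      (lam * ((d : ℂ) * (((1 : ℂ) + b) / ((b : ℂ) * 1 + 1)) ^ (d - 1) *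
        ((1 * ((b : ℂ) * 1 + 1) - ((1 : ℂ) + b) * b) / ((b : ℂ) * 1 + 1) ^ 2))) 1 := by
    exact (hg.pow d).const_mul lam
  have hone : ((1 : ℂ) + b) / ((b : ℂ) * 1 + 1) = 1 := by
    rw [show (1 : ℂ) + (b : ℂ) = (b : ℂ) * 1 + 1 by ring, div_self hden]
  have hval : deriv (fIsing d b lam) 1 = lam * ((d : ℂ) * ((1 - (b : ℂ)) / ((b : ℂ) + 1))) := by
    rw [hF.deriv, hone, one_pow, mul_one]
    congr 1
    rw [show (1 : ℂ) * ((b : ℂ) * 1 + 1) - ((1 : ℂ) + b) * b = (1 - b) * (b + 1) by ring,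
      show ((b : ℂ) * 1 + 1) ^ 2 = (b + 1) * (b + 1) by ring]
    field_simp
  have habs : ‖deriv (fIsing d b lam) 1‖ = (d : ℝ) * (b - 1) / (b + 1) := by
    rw [hval, norm_mul, hlam1, one_mul, norm_mul, norm_div]
    have e1 : (1 : ℂ) - (b : ℂ) = ((1 - b : ℝ) : ℂ) := by push_cast; ring
    have e2 : (b : ℂ) + 1 = ((b + 1 : ℝ) : ℂ) := by push_cast; ring
    rw [e1, e2, Complex.norm_real, Complex.norm_real, Complex.norm_natCast, Real.norm_eq_abs, Real.norm_eq_abs,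
      abs_of_nonpos (by linarith), abs_of_pos (by linarith)]
    ring
  have hd1 : (1 : ℝ) ≤ (d : ℝ) - 1 := by
    have : (2 : ℝ) ≤ (d : ℝ) := by exact_mod_cast hd
    linarith
  refine ⟨by rw [hfix], habs, ?_⟩
  rw [hfix, habs]
  constructor
  · rintro ⟨h1, h2⟩
    refine ⟨h1, ?_⟩
    rw [div_lt_one (by linarith)] at h2
    rw [lt_div_iff₀ (by linarith)]
    nlinarith
  · rintro ⟨h1, h2⟩
    refine ⟨h1, ?_⟩
    rw [lt_div_iff₀ (by linarith)] at h2
    rw [div_lt_one (by linarith)]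
    nlinarith
end

section
/- Let d ≥ 2 be an integer and b > 1 a real number, and let f_{−1}(z) = −((z+b)/(bz+1))^d. Then there exists a real number z with −1/b < z < 0 such that f_{−1}(f_{−1}(z)) = z and f_{−1}(z) ≠ z; that is, f_{−1} has a periodic point of exact period 2 inside the open unit disk. -/
open Complex

/-- Let `d ≥ 2` and `b > 1`.  Then `f_{−1}(z) = −((z+b)/(bz+1))^d` has a periodic
point of exact period 2 in the real interval `(−1/b, 0)` (inside the unit disk). -/
theorem stmt13 (d : ℕ) (hd : 2 ≤ d) (b : ℝ) (hb : 1 < b) :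
    ∃ z : ℝ, -1 / b < z ∧ z < 0 ∧
      fIsing d b (-1) (fIsing d b (-1) (z : ℂ)) = (z : ℂ) ∧
      fIsing d b (-1) (z : ℂ) ≠ (z : ℂ) := by
  have hb0 : (0:ℝ) < b := lt_trans one_pos hb
  set g : ℝ → ℝ := fun z => -((z + b) / (b * z + 1)) ^ d with hg
  have hcast : ∀ x : ℝ, fIsing d b (-1) (x : ℂ) = ((g x : ℝ) : ℂ) := by
    intro x
    simp only [fIsing, hg]
    push_cast
    ring
  -- Step A: for -1/b < z ≤ 0, g z < -b (in fact g z ≤ -b^d)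
  have hbb : b < b ^ d := by
    calc b = b ^ 1 := (pow_one b).symm
    _ < b ^ d := pow_lt_pow_right₀ hb (by omega)
  have stepA : ∀ z : ℝ, -1 / b < z → z ≤ 0 → g z ≤ -b ^ d := by
    intro z hz1 hz2
    have hD : 0 < b * z + 1 := by
      have : -1 < b * z := by
        have := (div_lt_iff₀ hb0).mp hz1
        linarith
      linarith
    have hr : b ≤ (z + b) / (b * z + 1) := by
      rw [le_div_iff₀ hD]
      nlinarith [mul_nonneg (show (0:ℝ) ≤ b*b-1 by nlinarith) (neg_nonneg.mpr hz2)]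
    have hrd : b ^ d ≤ ((z + b) / (b * z + 1)) ^ d :=
      pow_le_pow_left₀ hb0.le hr d
    simp only [hg]
    linarith
  -- Step B: for w < -b, -(1/b)^d < g w < 0
  have stepB : ∀ w : ℝ, w < -b → -(1 / b) ^ d < g w ∧ g w < 0 := by
    intro w hw
    have hD : b * w + 1 < 0 := by nlinarith
    have hnum : w + b < 0 := by linarith
    have hr0 : 0 < (w + b) / (b * w + 1) := div_pos_of_neg_of_neg hnum hD
    have hr1 : (w + b) / (b * w + 1) < 1 / b := by
      rw [div_lt_iff_of_neg hD]
      have heq : 1 / b * (b * w + 1) = w + 1 / b := by field_simp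
      have hib : 1 / b < b := by
        rw [div_lt_iff₀ hb0]; nlinarith
      rw [heq]; linarith
    constructor
    · have : ((w + b) / (b * w + 1)) ^ d < (1 / b) ^ d :=
        pow_lt_pow_left₀ hr1 hr0.le (by omega)
      simp only [hg]; linarith
    · have : 0 < ((w + b) / (b * w + 1)) ^ d := pow_pos hr0 d
      simp only [hg]; linarith
  set a : ℝ := -(1 / b) ^ d with ha
  have hinvb : (0:ℝ) < 1 / b := by positivity
  have ha1 : -1 / b < a := by
    have : (1 / b) ^ d < 1 / b := by
      calc (1 / b) ^ d < (1 / b) ^ 1 :=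
        pow_lt_pow_right_of_lt_one₀ hinvb (by rw [div_lt_one hb0]; exact hb) (by omega)
      _ = 1 / b := pow_one _
    simp only [ha, neg_div]
    linarith
  have ha0 : a < 0 := by
    have h := pow_pos hinvb d
    simp only [ha]; linarith
  -- key: for z in Icc a 0, g z < -b and a < g (g z) < 0
  have key : ∀ z ∈ Set.Icc a 0, g z < -b ∧ a < g (g z) ∧ g (g z) < 0 := by
    intro z hz
    obtain ⟨hz1, hz2⟩ := hz
    have hgz : g z ≤ -b ^ d := stepA z (lt_of_lt_of_le ha1 hz1) hz2
    have hgzb : g z < -b := by linarith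
    obtain ⟨h1, h2⟩ := stepB (g z) hgzb
    exact ⟨hgzb, by simpa [ha] using h1, h2⟩
  -- continuity
  have hgcont : ∀ s : Set ℝ, (∀ x ∈ s, b * x + 1 ≠ 0) → ContinuousOn g s := by
    intro s hs
    apply ContinuousOn.neg
    apply ContinuousOn.pow
    exact ContinuousOn.div (by fun_prop) (by fun_prop) hs
  have hc1 : ContinuousOn g (Set.Icc a 0) := by
    apply hgcont
    intro x hx
    have : -1 / b < x := lt_of_lt_of_le ha1 hx.1
    have : -1 < b * x := by
      have := (div_lt_iff₀ hb0).mp this; linarith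
    linarith
  have hc2 : ContinuousOn g (Set.Iio (-b)) := by
    apply hgcont
    intro x hx
    simp only [Set.mem_Iio] at hx
    nlinarith
  have hmaps : Set.MapsTo g (Set.Icc a 0) (Set.Iio (-b)) := by
    intro x hx
    exact (key x hx).1
  have hGcont : ContinuousOn (fun z => g (g z) - z) (Set.Icc a 0) :=
    ContinuousOn.sub (hc2.comp hc1 hmaps) continuousOn_id
  have hHa : 0 < g (g a) - a := by
    have := (key a ⟨le_refl a, ha0.le⟩).2.1
    linarith
  have hH0 : g (g 0) - 0 < 0 := by
    have := (key 0 ⟨ha0.le, le_refl 0⟩).2.2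
    linarith
  have hmem : (0:ℝ) ∈ Set.Icc (g (g 0) - 0) (g (g a) - a) := ⟨hH0.le, hHa.le⟩
  obtain ⟨z, hzmem, hzeq⟩ := intermediate_value_Icc' ha0.le hGcont hmem
  have hzeq' : g (g z) - z = 0 := hzeq
  have hzfix : g (g z) = z := by linarith
  have hza : a < z := by
    rcases lt_or_eq_of_le hzmem.1 with h | h
    · exact h
    · exfalso; rw [← h] at hzeq'; linarith
  have hz0 : z < 0 := by
    rcases lt_or_eq_of_le hzmem.2 with h | h
    · exact h
    · exfalso; rw [h] at hzeq'; linarith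
  refine ⟨z, lt_trans ha1 hza, hz0, ?_, ?_⟩
  · rw [hcast, hcast, hzfix]
  · rw [hcast]
    intro h
    have h' : g z = z := by exact_mod_cast h
    have hgz : g z < -b := (key z ⟨hza.le, hz0.le⟩).1
    have : -b < z := by
      have : -1/b < z := lt_trans ha1 hza
      have h1 : -1 < -1/b := by
        rw [neg_div, neg_lt_neg_iff, div_lt_one hb0]; exact hb
      linarith
    linarith [h' ▸ hgz]
end

section
/- Let d ≥ 2 be an integer and 1 < b < (d+1)/(d−1) a real number. Let λ ∈ S¹ with λ ≠ 1 satisfy f_λ(λ) = 1 (so that 1 is a periodic point of f_λ of exact period 2, since f_λ(1) = λ), and suppose 1 is repelling, i.e. |(f_λ ∘ f_λ)'(1)| > 1. Then g(λ) + f'_λ(λ) ≠ 0, where g(z) = ((z+b)/(bz+1))^d. -/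
open Complex

/-- `g(z) = ((z+b)/(bz+1))^d`, so that `f_λ = λ·g`. -/
noncomputable def gIsing (d : ℕ) (b : ℝ) (z : ℂ) : ℂ :=
  ((z + (b : ℂ)) / ((b : ℂ) * z + 1)) ^ d

lemma hasDerivAt_fIsing (d : ℕ) (b : ℝ) (lam z : ℂ) (hz : (b : ℂ) * z + 1 ≠ 0) :
    HasDerivAt (fIsing d b lam)
      (lam * ((d : ℂ) * ((z + (b : ℂ)) / ((b : ℂ) * z + 1)) ^ (d - 1) *
        ((1 * ((b : ℂ) * z + 1) - (z + (b : ℂ)) * (b : ℂ)) / ((b : ℂ) * z + 1) ^ 2))) z := by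
  have h1 : HasDerivAt (fun w : ℂ => w + (b : ℂ)) 1 z := (hasDerivAt_id z).add_const _
  have h2 : HasDerivAt (fun w : ℂ => (b : ℂ) * w + 1) (b : ℂ) z := by
    simpa using ((hasDerivAt_id z).const_mul (b : ℂ)).add_const (1 : ℂ)
  exact ((h1.div h2 hz).pow d).const_mul lam

/-- Let `d ≥ 2` and `1 < b < (d+1)/(d−1)`.  If `λ ∈ S¹`, `λ ≠ 1`, `f_λ(λ) = 1` (so
`1` is 2-periodic for `f_λ`) and `1` is repelling, i.e. `|(f_λ∘f_λ)'(1)| > 1`, then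
`g(λ) + f'_λ(λ) ≠ 0`. -/
theorem stmt14 (d : ℕ) (hd : 2 ≤ d) (b : ℝ) (hb1 : 1 < b)
    (hb2 : b < ((d : ℝ) + 1) / ((d : ℝ) - 1))
    (lam : ℂ) (hlam : lam ∈ Metric.sphere (0 : ℂ) 1) (hne : lam ≠ 1)
    (hfix : fIsing d b lam lam = 1)
    (hrep : 1 < ‖deriv (fun z => fIsing d b lam (fIsing d b lam z)) 1‖) :
    gIsing d b lam + deriv (fIsing d b lam) lam ≠ 0 := by
  have hlam1 : ‖lam‖ = 1 := by
    simpa [Complex.dist_eq] using hlam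
  have hb0 : (0:ℝ) < b + 1 := by linarith
  have hbC : ((b : ℂ) + 1) ≠ 0 := by
    intro h
    have : (b : ℝ) + 1 = 0 := by exact_mod_cast h
    linarith
  have hden1 : (b : ℂ) * 1 + 1 ≠ 0 := by simpa using hbC
  have hdenl : (b : ℂ) * lam + 1 ≠ 0 := by
    intro h
    have h' : (b : ℂ) * lam = -1 := by linear_combination h
    have := congrArg (‖·‖) h'
    simp [hlam1] at this
    rw [abs_of_pos (by linarith : (0:ℝ) < b)] at this
    linarith
  -- f(1) = lam
  have hf1 : fIsing d b lam 1 = lam := by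
    unfold fIsing
    rw [show (b : ℂ) * 1 + 1 = 1 + (b : ℂ) by ring, div_self (by simpa [add_comm] using hbC),
      one_pow, mul_one]
  have hD1 := hasDerivAt_fIsing d b lam 1 hden1
  have hDl := hasDerivAt_fIsing d b lam lam hdenl
  set Dl : ℂ := lam * ((d : ℂ) * ((lam + (b : ℂ)) / ((b : ℂ) * lam + 1)) ^ (d - 1) *
        ((1 * ((b : ℂ) * lam + 1) - (lam + (b : ℂ)) * (b : ℂ)) / ((b : ℂ) * lam + 1) ^ 2)) with hDldef
  set D1 : ℂ := lam * ((d : ℂ) * (((1:ℂ) + (b : ℂ)) / ((b : ℂ) * 1 + 1)) ^ (d - 1) *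
        ((1 * ((b : ℂ) * 1 + 1) - ((1:ℂ) + (b : ℂ)) * (b : ℂ)) / ((b : ℂ) * 1 + 1) ^ 2)) with hD1def
  have hDl' : HasDerivAt (fIsing d b lam) Dl (fIsing d b lam 1) := by rw [hf1]; exact hDl
  have hcomp : HasDerivAt (fun z => fIsing d b lam (fIsing d b lam z)) (Dl * D1) 1 :=
    hDl'.comp 1 hD1
  rw [hcomp.deriv] at hrep
  -- compute |D1|
  have h1b : (1 : ℂ) + (b : ℂ) ≠ 0 := by simpa [add_comm] using hbC
  have hD1val : D1 = lam * (d : ℂ) * (((1:ℝ) - b) / (1 + b) : ℝ) := by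
    rw [hD1def, show (b : ℂ) * 1 + 1 = 1 + (b : ℂ) by ring, div_self h1b, one_pow,
      show (1 * ((1:ℂ) + (b:ℂ)) - (1 + (b:ℂ)) * (b:ℂ)) = (1 - (b:ℂ)) * (1 + (b:ℂ)) by ring,
      sq, mul_div_mul_right _ _ h1b]
    push_cast
    ring
  have habsD1 : ‖D1‖ = d * ((b - 1) / (b + 1)) := by
    rw [hD1val, norm_mul, norm_mul, hlam1, Complex.norm_natCast, Complex.norm_real, Real.norm_eq_abs, one_mul]
    rw [abs_div, abs_of_neg (by linarith : (1:ℝ) - b < 0), abs_of_pos (by linarith : (0:ℝ) < 1 + b)]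
    ring_nf
  have hD1lt : ‖D1‖ < 1 := by
    rw [habsD1]
    have hd1 : (0:ℝ) < (d : ℝ) - 1 := by
      have : (2:ℝ) ≤ (d : ℝ) := by exact_mod_cast hd
      linarith
    have h2 : b * ((d:ℝ) - 1) < (d : ℝ) + 1 := (lt_div_iff₀ hd1).mp hb2
    have hdb : (d : ℝ) * (b - 1) < b + 1 := by nlinarith
    rw [← mul_div_assoc, div_lt_one (by linarith : (0:ℝ) < b + 1)]
    exact hdb
  intro hsum
  -- deriv f at lam = Dl
  rw [hDl.deriv] at hsum
  have hgl : ‖gIsing d b lam‖ = 1 := by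
    have : lam * gIsing d b lam = 1 := hfix
    have := congrArg (‖·‖) this
    simp [hlam1] at this
    exact this
  have hDlabs : ‖Dl‖ = 1 := by
    have : Dl = -gIsing d b lam := by linear_combination hsum
    rw [this, norm_neg, hgl]
  rw [norm_mul, hDlabs, one_mul] at hrep
  linarith [hD1lt]
end
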